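/- arXiv:1411.3791 — 4 statements merged into one kernel-verified Lean document; each statement's English description precedes it below -/
import Mathlib

section
/- The subcontract relation ⪯ over output persistent contracts is an independent subcontract preorder: for any n ≥ 1, output persistent contracts C_1,…,C_n and C'_1,…,C'_n with C'_i ⪯ C_i for all i, and distinct roles l_1,…,l_n with l_i ∉ oroles(C_i) ∪ oroles(C'_i), if ([C_1]_{l_1} || … || [C_n]_{l_n})↓ then ([C'_1]_{l_1} || … || [C'_n]_{l_n})↓. -/
/-!
Formalization of choreographies, orchestrations and behavioural contracts
following Bravetti–Zavattaro, "Choreographies and Behavioural Contracts on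
the Way to Dynamic Updates".
-/

/-- Action names (a denumerable set). -/
abbrev AName := ℕ
/-- Roles. -/
abbrev Role := ℕ

/-! ### The choreography calculus -/

/-- Choreographies, including the auxiliary terms `one` (successful completion)
and `zero` (halt). -/
inductive Chor : Type
  | comm : AName → Role → Role → Chor      -- a_{r→s}
  | choice : Chor → Chor → Chor
  | seq : Chor → Chor → Chor
  | par : Chor → Chor → Chor
  | star : Chor → Chor
  | one : Chor
  | zero : Chor
  deriving DecidableEq

/-- Labels of the choreography semantics: interactions `a_{r→s}` and `√`. -/
inductive CLabel : Type
  | comm : AName → Role → Role → CLabel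
  | tick : CLabel
  deriving DecidableEq

/-- Operational semantics of choreographies. -/
inductive CStep : Chor → CLabel → Chor → Prop
  | comm : CStep (.comm a r s) (.comm a r s) .one
  | one : CStep .one .tick .zero
  | starTick : CStep (.star H) .tick .zero
  | choiceL : CStep H η H' → CStep (.choice H L) η H'
  | choiceR : CStep L η L' → CStep (.choice H L) η L'
  | seqL : CStep H η H' → η ≠ .tick → CStep (.seq H L) η (.seq H' L)
  | seqTick : CStep H .tick H' → CStep L η L' → CStep (.seq H L) η L'
  | parL : CStep H η H' → η ≠ .tick → CStep (.par H L) η (.par H' L)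
  | parR : CStep L η L' → η ≠ .tick → CStep (.par H L) η (.par H L')
  | parTick : CStep H .tick H' → CStep L .tick L' → CStep (.par H L) .tick (.par H' L')
  | starStep : CStep H η H' → η ≠ .tick → CStep (.star H) η (.seq H' (.star H))

/-- Roles syntactically occurring in a choreography. -/
def rolesC : Chor → Finset Role
  | .comm _ r s => {r, s}
  | .choice H L | .seq H L | .par H L => rolesC H ∪ rolesC L
  | .star H => rolesC H
  | .one | .zero => ∅

/-- Action names syntactically occurring in a choreography. -/
def namesC : Chor → Finset AName
  | .comm a _ _ => {a}
  | .choice H L | .seq H L | .par H L => namesC H ∪ namesC L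
  | .star H => namesC H
  | .one | .zero => ∅

/-! ### The orchestration calculus -/

/-- Orchestrations (also used as behavioural contract terms). -/
inductive Orc : Type
  | zero : Orc
  | one : Orc
  | tau : Orc
  | inp : AName → Orc              -- receive a
  | out : AName → Role → Orc       -- invoke ā directed to role l
  | seq : Orc → Orc → Orc
  | choice : Orc → Orc → Orc
  | par : Orc → Orc → Orc
  | star : Orc → Orc
  deriving DecidableEq

/-- Labels of the orchestration/contract semantics. -/
inductive OLabel : Type
  | tau : OLabel
  | inp : AName → OLabel
  | out : AName → Role → OLabel
  | tick : OLabel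
  deriving DecidableEq

/-- Operational semantics of orchestrations/contracts. -/
inductive OStep : Orc → OLabel → Orc → Prop
  | one : OStep .one .tick .zero
  | tau : OStep .tau .tau .one
  | inp : OStep (.inp a) (.inp a) .one
  | out : OStep (.out a l) (.out a l) .one
  | choiceL : OStep C μ C' → OStep (.choice C D) μ C'
  | choiceR : OStep D μ D' → OStep (.choice C D) μ D'
  | seqL : OStep C μ C' → μ ≠ .tick → OStep (.seq C D) μ (.seq C' D)
  | seqTick : OStep C .tick C' → OStep D μ D' → OStep (.seq C D) μ D'
  | parL : OStep C μ C' → μ ≠ .tick → OStep (.par C D) μ (.par C' D)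
  | parR : OStep D μ D' → μ ≠ .tick → OStep (.par C D) μ (.par C D')
  | parTick : OStep C .tick C' → OStep D .tick D' → OStep (.par C D) .tick (.par C' D')
  | starTick : OStep (.star C) .tick .zero
  | starStep : OStep C μ C' → μ ≠ .tick → OStep (.star C) μ (.seq C' (.star C))

/-! ### Systems (compositions of located orchestrations/contracts) -/

/-- Systems: parallel compositions of located orchestrations `[C]_l`. -/
inductive Sys : Type
  | atom : Orc → Role → Sys
  | par : Sys → Sys → Sys
  deriving DecidableEq

/-- Labels of the system semantics. -/
inductive SLabel : Type
  | tau : SLabel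
  | inp : AName → Role → SLabel            -- a_s
  | out : AName → Role → Role → SLabel     -- ā_{r s}
  | comm : AName → Role → Role → SLabel    -- a_{r→s}
  | tick : SLabel
  deriving DecidableEq

/-- Operational semantics of systems. -/
inductive SStep : Sys → SLabel → Sys → Prop
  | atomTau : OStep C .tau C' → SStep (.atom C r) .tau (.atom C' r)
  | atomInp : OStep C (.inp a) C' → SStep (.atom C r) (.inp a r) (.atom C' r)
  | atomOut : OStep C (.out a s) C' → SStep (.atom C r) (.out a r s) (.atom C' r)
  | atomTick : OStep C .tick C' → SStep (.atom C r) .tick (.atom C' r)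
  | parL : SStep P μ P' → μ ≠ .tick → SStep (.par P Q) μ (.par P' Q)
  | parR : SStep Q μ Q' → μ ≠ .tick → SStep (.par P Q) μ (.par P Q')
  | commLR : SStep P (.out a r s) P' → SStep Q (.inp a s) Q' →
      SStep (.par P Q) (.comm a r s) (.par P' Q')
  | commRL : SStep P (.inp a s) P' → SStep Q (.out a r s) Q' →
      SStep (.par P Q) (.comm a r s) (.par P' Q')
  | parTick : SStep P .tick P' → SStep Q .tick Q' → SStep (.par P Q) .tick (.par P' Q')

/-- One step of a completely specified system: an internal `τ` step or a
completed interaction `a_{r→s}`. -/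
def CompleteStep (P P' : Sys) : Prop :=
  SStep P .tau P' ∨ ∃ a r s, SStep P (.comm a r s) P'

/-- Reachability through complete (τ / completed-interaction) steps. -/
inductive Reach : Sys → Sys → Prop
  | refl (P) : Reach P P
  | step : CompleteStep P P' → Reach P' P'' → Reach P P''

/-- `P` can perform the successful-termination label `√`. -/
def CanTick (P : Sys) : Prop := ∃ P', SStep P .tick P'

/-- Correct composition `P↓`: every reachable state can reach a state able to
perform `√`. -/
def Correct (P : Sys) : Prop :=
  ∀ P', Reach P P' → ∃ P'', Reach P' P'' ∧ CanTick P''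

/-- `WTrace P w` is the weak transition `P ⇒^{w√}`: `P` performs the sequence
`w` of completed interactions `a_{r→s}` (absorbing `τ` steps) and then `√`. -/
inductive WTrace : Sys → List (AName × Role × Role) → Prop
  | tick : CanTick P → WTrace P []
  | tau : SStep P .tau P' → WTrace P' w → WTrace P w
  | comm : SStep P (.comm a r s) P' → WTrace P' w → WTrace P ((a, r, s) :: w)

/-- `CTrace H w` is the transition sequence `H →^{w√}`. -/
inductive CTrace : Chor → List (AName × Role × Role) → Prop
  | tick : CStep H .tick H' → CTrace H []
  | comm : CStep H (.comm a r s) H' → CTrace H' w → CTrace H ((a, r, s) :: w)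

/-- `P` implements `H` (written `P ∝ H`): `P` is a correct composition and all
its conversations (followed by `√`) are admitted by `H`. -/
def Implements (P : Sys) (H : Chor) : Prop :=
  Correct P ∧ ∀ w, WTrace P w → CTrace H w

/-! ### Projection and well-formedness -/

/-- Projection of a choreography on a role (homomorphic over all operators). -/
def proj : Chor → Role → Orc
  | .comm a r s, t => if t = r then .out a s else if t = s then .inp a else .one
  | .choice H L, t => .choice (proj H t) (proj L t)
  | .seq H L, t => .seq (proj H t) (proj L t)
  | .par H L, t => .par (proj H t) (proj L t)
  | .star H, t => .star (proj H t)
  | .one, _ => .one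
  | .zero, _ => .zero

/-- Parallel composition of a list of located contracts
`[C_1]_{l_1} || … || [C_n]_{l_n}`. -/
def composeC : List (Orc × Role) → Sys
  | [] => .atom .one 0
  | [(C, l)] => .atom C l
  | (C, l) :: x :: xs => .par (.atom C l) (composeC (x :: xs))

/-- Well-formed choreography: the system obtained by projecting `H` on all its
roles implements `H` (for any enumeration of its roles). -/
def WellFormed (H : Chor) : Prop :=
  ∀ L : List Role, L.Nodup → L.toFinset = rolesC H →
    Implements (composeC (L.map fun r => (proj H r, r))) H

/-! ### Behavioural contracts: basic notions -/

/-- Roles targeted by output actions syntactically occurring in a contract. -/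
def oroles : Orc → Finset Role
  | .out _ l => {l}
  | .seq C D | .choice C D | .par C D => oroles C ∪ oroles D
  | .star C => oroles C
  | _ => ∅

/-- Input action names syntactically occurring in a contract: `I(C)`. -/
def inames : Orc → Finset AName
  | .inp a => {a}
  | .seq C D | .choice C D | .par C D => inames C ∪ inames D
  | .star C => inames C
  | _ => ∅

/-- `C \\ M`: replace every input on a name in `M` occurring in `C` by `0`. -/
def restrict (C : Orc) (M : Finset AName) : Orc :=
  match C with
  | .inp a => if a ∈ M then .zero else .inp a
  | .seq C D => .seq (restrict C M) (restrict D M)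
  | .choice C D => .choice (restrict C M) (restrict D M)
  | .par C D => .par (restrict C M) (restrict D M)
  | .star C => .star (restrict C M)
  | C => C

/-- Reachability in the contract LTS (through any labels). -/
inductive OReach : Orc → Orc → Prop
  | refl (C) : OReach C C
  | step : OStep C μ C' → OReach C' C'' → OReach C C''

/-- Output persistence: once a contract decides to execute an output, its
actual execution is mandatory to reach successful termination. -/
def OutputPersistent (C : Orc) : Prop :=
  ∀ C', OReach C C' → ∀ a l, (∃ D, OStep C' (.out a l) D) →
    (¬ ∃ D, OStep C' .tick D) ∧
    (∀ μ C'', OStep C' μ C'' → μ ≠ .out a l → ∃ D, OStep C'' (.out a l) D)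

/-- The list of roles of the located contracts occurring in a system. -/
def rolesList : Sys → List Role
  | .atom _ r => [r]
  | .par P Q => rolesList P ++ rolesList Q

/-- No contract sends outputs to its own role. -/
def NoSelfOut : Sys → Prop
  | .atom C r => r ∉ oroles C
  | .par P Q => NoSelfOut P ∧ NoSelfOut Q

/-- Well-formed system: pairwise distinct roles, no output to one's own role. -/
def WFSys (P : Sys) : Prop := (rolesList P).Nodup ∧ NoSelfOut P

/-- All contracts occurring in the system are output persistent. -/
def AllOP : Sys → Prop
  | .atom C _ => OutputPersistent C
  | .par P Q => AllOP P ∧ AllOP Q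

/-- The subcontract relation `C' ⪯ C` (compliance testing): for every fresh
role `l` and every test composition `P` of output persistent contracts not
using `l`, correctness of `[C]_l || P` implies correctness of `[C']_l || P`. -/
def Subcontract (C' C : Orc) : Prop :=
  ∀ l : Role, l ∉ oroles C ∪ oroles C' →
    ∀ P : Sys, AllOP P → WFSys P → l ∉ rolesList P →
      Correct (.par (.atom C l) P) → Correct (.par (.atom C' l) P)

/-- Independent subcontract pre-order over output persistent contracts:
a pre-order such that refining any number of contracts of a correct system
independently preserves correctness. -/
def IndepSubcontractPre (le : Orc → Orc → Prop) : Prop :=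
  (∀ C, OutputPersistent C → le C C) ∧
  (∀ C₁ C₂ C₃, OutputPersistent C₁ → OutputPersistent C₂ → OutputPersistent C₃ →
      le C₁ C₂ → le C₂ C₃ → le C₁ C₃) ∧
  (∀ L : List (Orc × Orc × Role), L ≠ [] →
    (∀ x ∈ L, OutputPersistent x.1 ∧ OutputPersistent x.2.1 ∧ le x.2.1 x.1) →
    (L.map fun x => x.2.2).Nodup →
    (∀ x ∈ L, x.2.2 ∉ oroles x.1 ∪ oroles x.2.1) →
    Correct (composeC (L.map fun x => (x.1, x.2.2))) →
    Correct (composeC (L.map fun x => (x.2.1, x.2.2))))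

/-- An uncontrollable contract: no test composition can lead it to success. -/
def Uncontrollable (C : Orc) : Prop :=
  ¬ ∃ (l : Role) (P : Sys), l ∉ oroles C ∧ AllOP P ∧ WFSys P ∧ l ∉ rolesList P ∧
      Correct (.par (.atom C l) P)

/-- Weak traces of a contract: sequences of visible labels, absorbing `τ`. -/
inductive WOTrace : Orc → List OLabel → Prop
  | nil (C) : WOTrace C []
  | tau : OStep C .tau C' → WOTrace C' w → WOTrace C w
  | vis : OStep C μ C' → μ ≠ .tau → WOTrace C' w → WOTrace C (μ :: w)

/-! ### Should-testing (fair testing) à la Rensink–Vogler -/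

/-- Labels of tests: internal moves, synchronization with a (visible) action of
the tested contract (`√` included as any other action), and test success `√'`. -/
inductive TLab : Type
  | tau : TLab
  | sync : OLabel → TLab
  | succ : TLab

/-- A test: a labelled transition system over `TLab`. -/
structure TestLTS where
  S : Type
  step : S → TLab → S → Prop
  init : S

/-- Steps of a contract/test configuration. -/
inductive TCStep (T : TestLTS) : (Orc × T.S) → (Orc × T.S) → Prop
  | ctau : OStep C .tau C' → TCStep T (C, t) (C', t)
  | ttau : T.step t .tau t' → TCStep T (C, t) (C, t')
  | sync : OStep C μ C' → μ ≠ OLabel.tau → T.step t (.sync μ) t' → TCStep T (C, t) (C', t')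

/-- Reachability of configurations. -/
inductive TCReach (T : TestLTS) : (Orc × T.S) → (Orc × T.S) → Prop
  | refl (c) : TCReach T c c
  | step : TCStep T c c' → TCReach T c' c'' → TCReach T c c''

/-- `C` should-passes `T`: from every reachable configuration a configuration
in which the test can perform the success action is reachable. -/
def Shd (C : Orc) (T : TestLTS) : Prop :=
  ∀ c, TCReach T (C, T.init) c → ∃ c', TCReach T c c' ∧ ∃ t', T.step c'.2 .succ t'

/-- The should-testing (fair testing) pre-order: `ShouldPre C' C` holds iff
every test that `C` should-passes is also should-passed by `C'`. -/
def ShouldPre (C' C : Orc) : Prop := ∀ T : TestLTS, Shd C T → Shd C' T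

/-- The normal form `NF(C)`: the recursive-equations presentation of the LTS of
`C`.  Since contracts are here represented directly by LTS-denoting terms and
the should-testing pre-order only depends on the underlying LTS, the normal
form is the term itself. -/
def NF (C : Orc) : Orc := C

/-! ### Auxiliary development for Statement 1 -/

/-- Structural rearrangement of systems (commutativity/associativity of `||`). -/
inductive SE : Sys → Sys → Prop
  | refl (P) : SE P P
  | trans : SE P Q → SE Q R → SE P R
  | parCong : SE P P' → SE Q Q' → SE (.par P Q) (.par P' Q')
  | swap : SE (.par P Q) (.par Q P)
  | assoc : SE (.par (.par P Q) R) (.par P (.par Q R))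
  | assocInv : SE (.par P (.par Q R)) (.par (.par P Q) R)

theorem SE.symm {P Q : Sys} (h : SE P Q) : SE Q P := by
  induction h with
  | refl => exact .refl _
  | trans _ _ ih1 ih2 => exact .trans ih2 ih1
  | parCong _ _ ih1 ih2 => exact .parCong ih1 ih2
  | swap => exact .swap
  | assoc => exact .assocInv
  | assocInv => exact .assoc

theorem SE.sim {P Q : Sys} (h : SE P Q) :
    ∀ μ P₁, SStep P μ P₁ → ∃ Q₁, SStep Q μ Q₁ ∧ SE P₁ Q₁ := by
  induction h with
  | refl => exact fun μ P₁ h => ⟨P₁, h, .refl _⟩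
  | trans _ _ ih1 ih2 =>
      intro μ P₁ hs
      obtain ⟨Q₁, hQ, hse⟩ := ih1 μ P₁ hs
      obtain ⟨R₁, hR, hse'⟩ := ih2 μ Q₁ hQ
      exact ⟨R₁, hR, hse.trans hse'⟩
  | @parCong P P' Q Q' hP hQ ih1 ih2 =>
      intro μ S hs
      cases hs with
      | parL h hn =>
          obtain ⟨P₁, h1, h2⟩ := ih1 _ _ h
          exact ⟨_, .parL h1 hn, .parCong h2 hQ⟩
      | parR h hn =>
          obtain ⟨Q₁, h1, h2⟩ := ih2 _ _ h
          exact ⟨_, .parR h1 hn, .parCong hP h2⟩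
      | commLR h1 h2 =>
          obtain ⟨P₁, hp1, hp2⟩ := ih1 _ _ h1
          obtain ⟨Q₁, hq1, hq2⟩ := ih2 _ _ h2
          exact ⟨_, .commLR hp1 hq1, .parCong hp2 hq2⟩
      | commRL h1 h2 =>
          obtain ⟨P₁, hp1, hp2⟩ := ih1 _ _ h1
          obtain ⟨Q₁, hq1, hq2⟩ := ih2 _ _ h2
          exact ⟨_, .commRL hp1 hq1, .parCong hp2 hq2⟩
      | parTick h1 h2 =>
          obtain ⟨P₁, hp1, hp2⟩ := ih1 _ _ h1
          obtain ⟨Q₁, hq1, hq2⟩ := ih2 _ _ h2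
          exact ⟨_, .parTick hp1 hq1, .parCong hp2 hq2⟩
  | swap =>
      intro μ S hs
      cases hs with
      | parL h hn => exact ⟨_, .parR h hn, .swap⟩
      | parR h hn => exact ⟨_, .parL h hn, .swap⟩
      | commLR h1 h2 => exact ⟨_, .commRL h2 h1, .swap⟩
      | commRL h1 h2 => exact ⟨_, .commLR h2 h1, .swap⟩
      | parTick h1 h2 => exact ⟨_, .parTick h2 h1, .swap⟩
  | assoc =>
      intro μ S hs
      cases hs with
      | parL h hn =>
          cases h with
          | parL h hn' => exact ⟨_, .parL h hn', .assoc⟩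
          | parR h hn' => exact ⟨_, .parR (.parL h hn') hn', .assoc⟩
          | commLR h1 h2 =>
              exact ⟨_, .commLR h1 (.parL h2 (by simp)), .assoc⟩
          | commRL h1 h2 =>
              exact ⟨_, .commRL h1 (.parL h2 (by simp)), .assoc⟩
          | parTick h1 h2 => exact absurd rfl hn
      | parR h hn => exact ⟨_, .parR (.parR h hn) hn, .assoc⟩
      | commLR h1 h2 =>
          cases h1 with
          | parL h hn' => exact ⟨_, .commLR h (.parR h2 (by simp)), .assoc⟩
          | parR h hn' => exact ⟨_, .parR (.commLR h h2) (by simp), .assoc⟩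
      | commRL h1 h2 =>
          cases h1 with
          | parL h hn' => exact ⟨_, .commRL h (.parR h2 (by simp)), .assoc⟩
          | parR h hn' => exact ⟨_, .parR (.commRL h h2) (by simp), .assoc⟩
      | parTick h1 h2 =>
          cases h1 with
          | parL _ hn' => exact absurd rfl hn'
          | parR _ hn' => exact absurd rfl hn'
          | parTick ha hb => exact ⟨_, .parTick ha (.parTick hb h2), .assoc⟩
  | assocInv =>
      intro μ S hs
      cases hs with
      | parL h hn => exact ⟨_, .parL (.parL h hn) hn, .assocInv⟩
      | parR h hn =>
          cases h with
          | parL h hn' => exact ⟨_, .parL (.parR h hn') hn', .assocInv⟩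
          | parR h hn' => exact ⟨_, .parR h hn', .assocInv⟩
          | commLR h1 h2 =>
              exact ⟨_, .commLR (.parR h1 (by simp)) h2, .assocInv⟩
          | commRL h1 h2 =>
              exact ⟨_, .commRL (.parR h1 (by simp)) h2, .assocInv⟩
          | parTick h1 h2 => exact absurd rfl hn
      | commLR h1 h2 =>
          cases h2 with
          | parL h hn' => exact ⟨_, .parL (.commLR h1 h) (by simp), .assocInv⟩
          | parR h hn' => exact ⟨_, .commLR (.parL h1 (by simp)) h, .assocInv⟩
      | commRL h1 h2 =>
          cases h2 with
          | parL h hn' => exact ⟨_, .parL (.commRL h1 h) (by simp), .assocInv⟩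
          | parR h hn' => exact ⟨_, .commRL (.parL h1 (by simp)) h, .assocInv⟩
      | parTick h1 h2 =>
          cases h2 with
          | parL _ hn' => exact absurd rfl hn'
          | parR _ hn' => exact absurd rfl hn'
          | parTick ha hb => exact ⟨_, .parTick (.parTick h1 ha) hb, .assocInv⟩

theorem SE.completeStep {P Q P₁ : Sys} (h : SE P Q) (hs : CompleteStep P P₁) :
    ∃ Q₁, CompleteStep Q Q₁ ∧ SE P₁ Q₁ := by
  rcases hs with h1 | ⟨a, r, s, h1⟩
  · obtain ⟨Q₁, h2, h3⟩ := h.sim _ _ h1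
    exact ⟨Q₁, Or.inl h2, h3⟩
  · obtain ⟨Q₁, h2, h3⟩ := h.sim _ _ h1
    exact ⟨Q₁, Or.inr ⟨a, r, s, h2⟩, h3⟩

theorem SE.canTick {P Q : Sys} (h : SE P Q) (hs : CanTick P) : CanTick Q := by
  obtain ⟨P', hP'⟩ := hs
  obtain ⟨Q', h1, _⟩ := h.sim _ _ hP'
  exact ⟨Q', h1⟩

theorem SE.reach {P P₁ : Sys} (hr : Reach P P₁) :
    ∀ Q, SE P Q → ∃ Q₁, Reach Q Q₁ ∧ SE P₁ Q₁ := by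
  induction hr with
  | refl P => exact fun Q h => ⟨Q, .refl Q, h⟩
  | step h1 _ ih =>
      intro Q h
      obtain ⟨Q', h2, h3⟩ := h.completeStep h1
      obtain ⟨Q₁, h4, h5⟩ := ih Q' h3
      exact ⟨Q₁, .step h2 h4, h5⟩

theorem SE.correct {P Q : Sys} (h : SE P Q) (hc : Correct P) : Correct Q := by
  intro Q' hr
  obtain ⟨P', hP', hse⟩ := SE.reach hr P h.symm
  obtain ⟨P'', h1, h2⟩ := hc P' hP'
  obtain ⟨Q'', h3, h4⟩ := SE.reach h1 Q' hse.symm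
  exact ⟨Q'', h3, h4.canTick h2⟩

/-! #### The unit component `[1]_r` -/

theorem ostep_one {μ : OLabel} {D : Orc} (h : OStep .one μ D) :
    μ = .tick ∧ D = .zero := by cases h; exact ⟨rfl, rfl⟩

theorem sstep_unit {r : Role} {μ : SLabel} {S : Sys}
    (h : SStep (.atom .one r) μ S) : μ = .tick ∧ S = .atom .zero r := by
  cases h with
  | atomTau h => exact absurd (ostep_one h).1 (by simp)
  | atomInp h => exact absurd (ostep_one h).1 (by simp)
  | atomOut h => exact absurd (ostep_one h).1 (by simp)
  | atomTick h => exact ⟨rfl, by rw [(ostep_one h).2]⟩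

theorem unit_completeStep {P X : Sys} {r : Role}
    (h : CompleteStep (.par P (.atom .one r)) X) :
    ∃ P', X = .par P' (.atom .one r) ∧ CompleteStep P P' := by
  rcases h with h | ⟨a, s, t, h⟩
  · cases h with
    | parL h hn => exact ⟨_, rfl, Or.inl h⟩
    | parR h hn => exact absurd (sstep_unit h).1 (by simp)
  · cases h with
    | parL h hn => exact ⟨_, rfl, Or.inr ⟨a, s, t, h⟩⟩
    | parR h hn => exact absurd (sstep_unit h).1 (by simp)
    | commLR h1 h2 => exact absurd (sstep_unit h2).1 (by simp)
    | commRL h1 h2 => exact absurd (sstep_unit h2).1 (by simp)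

theorem unit_canTick {P : Sys} {r : Role} :
    CanTick (.par P (.atom .one r)) ↔ CanTick P := by
  constructor
  · rintro ⟨X, h⟩
    cases h with
    | parL _ hn => exact absurd rfl hn
    | parR _ hn => exact absurd rfl hn
    | parTick h1 h2 => exact ⟨_, h1⟩
  · rintro ⟨P', h⟩
    exact ⟨_, .parTick h (.atomTick .one)⟩

theorem unit_reach_down {X Y : Sys} (h : Reach X Y) :
    ∀ (P : Sys) (r : Role), X = .par P (.atom .one r) →
      ∃ P', Y = .par P' (.atom .one r) ∧ Reach P P' := by
  induction h with
  | refl X => exact fun P r hX => ⟨P, hX, .refl P⟩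
  | @step X X' Y h1 _ ih =>
      rintro P r rfl
      obtain ⟨P', rfl, h3⟩ := unit_completeStep h1
      obtain ⟨P'', h4, h5⟩ := ih P' r rfl
      exact ⟨P'', h4, .step h3 h5⟩

theorem completeStep_parL {P P' Q : Sys} (h : CompleteStep P P') :
    CompleteStep (.par P Q) (.par P' Q) := by
  rcases h with h | ⟨a, r, s, h⟩
  · exact Or.inl (.parL h (by simp))
  · exact Or.inr ⟨a, r, s, .parL h (by simp)⟩

theorem reach_parL {P P' Q : Sys} (h : Reach P P') :
    Reach (.par P Q) (.par P' Q) := by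
  induction h with
  | refl P => exact .refl _
  | step h1 _ ih => exact .step (completeStep_parL h1) ih

theorem unit_correct_iff {P : Sys} {r : Role} :
    Correct (.par P (.atom .one r)) ↔ Correct P := by
  constructor
  · intro hc P' hr
    obtain ⟨X, h1, h2⟩ := hc _ (reach_parL hr)
    obtain ⟨P'', rfl, h3⟩ := unit_reach_down h1 P' r rfl
    exact ⟨P'', h3, unit_canTick.mp h2⟩
  · intro hc X hr
    obtain ⟨P', rfl, h1⟩ := unit_reach_down hr P r rfl
    obtain ⟨P'', h2, h3⟩ := hc P' h1
    exact ⟨_, reach_parL h2, unit_canTick.mpr h3⟩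

theorem op_one : OutputPersistent Orc.one := by
  intro C' hr a l hout
  exfalso
  obtain ⟨D, hD⟩ := hout
  cases hr with
  | refl => cases hD
  | step h1 h2 =>
      obtain ⟨rfl, rfl⟩ := ostep_one h1
      cases h2 with
      | refl => cases hD
      | step h3 _ => cases h3

/-! #### Facts about `composeC` -/

theorem composeC_cons (x : Orc × Role) (xs : List (Orc × Role)) (h : xs ≠ []) :
    composeC (x :: xs) = .par (.atom x.1 x.2) (composeC xs) := by
  cases xs with
  | nil => exact absurd rfl h
  | cons y ys => rfl

theorem allOP_composeC {xs : List (Orc × Role)}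
    (h : ∀ y ∈ xs, OutputPersistent y.1) : AllOP (composeC xs) := by
  induction xs with
  | nil => exact op_one
  | cons x xs ih =>
      cases xs with
      | nil => exact h x (by simp)
      | cons y ys =>
          exact ⟨h x (by simp), ih fun z hz => h z (List.mem_cons_of_mem _ hz)⟩

theorem rolesList_composeC {xs : List (Orc × Role)} (h : xs ≠ []) :
    rolesList (composeC xs) = xs.map Prod.snd := by
  induction xs with
  | nil => exact absurd rfl h
  | cons x xs ih =>
      cases xs with
      | nil => rfl
      | cons y ys =>
          show _ ++ _ = _
          rw [ih (by simp)]; rfl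

theorem noSelfOut_composeC {xs : List (Orc × Role)}
    (h : ∀ y ∈ xs, y.2 ∉ oroles y.1) : NoSelfOut (composeC xs) := by
  induction xs with
  | nil => simp [composeC, NoSelfOut, oroles]
  | cons x xs ih =>
      cases xs with
      | nil => exact h x (by simp)
      | cons y ys =>
          exact ⟨h x (by simp), ih fun z hz => h z (List.mem_cons_of_mem _ hz)⟩

theorem rotate (ys : List (Orc × Role)) :
    ∀ (zs : List (Orc × Role)) (t : Orc × Role), ys ++ zs ≠ [] →
      SE (composeC (ys ++ t :: zs)) (.par (.atom t.1 t.2) (composeC (ys ++ zs))) := by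
  induction ys with
  | nil =>
      intro zs t h
      simp only [List.nil_append] at *
      rw [composeC_cons t zs h]
      exact .refl _
  | cons y ys ih =>
      intro zs t _
      rw [List.cons_append, composeC_cons y _ (by simp), List.cons_append]
      by_cases hy : ys ++ zs = []
      · obtain ⟨rfl, rfl⟩ : ys = [] ∧ zs = [] := by
          cases ys <;> simp_all
        exact .swap
      · have h1 := ih zs t hy
        refine .trans (.parCong (.refl _) h1) ?_
        rw [composeC_cons y _ hy]
        exact .trans .assocInv (.trans (.parCong .swap (.refl _)) .assoc)

/-! #### Refinement of one component, then of all components -/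

theorem refine_one (ys zs : List (Orc × Role)) (C C' : Orc) (l : Role)
    (hsub : Subcontract C' C) (hl : l ∉ oroles C ∪ oroles C')
    (hOPs : ∀ y ∈ ys ++ zs, OutputPersistent y.1)
    (hself : ∀ y ∈ ys ++ zs, y.2 ∉ oroles y.1)
    (hnodup : (ys.map Prod.snd ++ l :: zs.map Prod.snd).Nodup)
    (hc : Correct (composeC (ys ++ (C, l) :: zs))) :
    Correct (composeC (ys ++ (C', l) :: zs)) := by
  by_cases hys : ys ++ zs = []
  · obtain ⟨rfl, rfl⟩ : ys = [] ∧ zs = [] := by cases ys <;> simp_all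
    simp only [List.nil_append] at hc ⊢
    obtain ⟨r, hr⟩ := Infinite.exists_notMem_finset
      (insert l (oroles C ∪ oroles C'))
    simp only [Finset.mem_insert, Finset.mem_union, not_or] at hr
    have h1 : Correct (.par (.atom C l) (.atom .one r)) :=
      unit_correct_iff.mpr hc
    have h2 := hsub l hl (.atom .one r) op_one
      ⟨List.nodup_singleton r, by simp [NoSelfOut, oroles]⟩
      (by simpa [rolesList] using fun h => hr.1 h.symm) h1
    exact unit_correct_iff.mp h2
  · have hrot := rotate ys zs (C, l) hys
    have hrot' := rotate ys zs (C', l) hys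
    have h1 : Correct (.par (.atom C l) (composeC (ys ++ zs))) :=
      hrot.correct hc
    have hnd : ((ys ++ zs).map Prod.snd).Nodup := by
      rw [List.map_append]
      exact hnodup.sublist
        (List.Sublist.append (List.Sublist.refl _) (List.sublist_cons_self _ _))
    have hlnot : l ∉ rolesList (composeC (ys ++ zs)) := by
      rw [rolesList_composeC hys, List.map_append]
      simp only [List.nodup_append, List.nodup_cons] at hnodup
      intro hmem
      rcases List.mem_append.mp hmem with h | h
      · exact hnodup.2.2 l h l (by simp) rfl
      · exact hnodup.2.1.1 h
    have h2 := hsub l hl (composeC (ys ++ zs)) (allOP_composeC hOPs)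
      ⟨by rw [rolesList_composeC hys]; exact hnd, noSelfOut_composeC hself⟩
      hlnot h1
    exact hrot'.symm.correct h2

theorem refine_suffix (M : List (Orc × Orc × Role)) :
    ∀ ys : List (Orc × Role),
    (∀ x ∈ M, OutputPersistent x.1 ∧ OutputPersistent x.2.1 ∧
        Subcontract x.2.1 x.1) →
    (∀ x ∈ M, x.2.2 ∉ oroles x.1 ∪ oroles x.2.1) →
    (∀ y ∈ ys, OutputPersistent y.1 ∧ y.2 ∉ oroles y.1) →
    (ys.map Prod.snd ++ M.map (fun x => x.2.2)).Nodup →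
    Correct (composeC (ys ++ M.map (fun x => (x.1, x.2.2)))) →
    Correct (composeC (ys ++ M.map (fun x => (x.2.1, x.2.2)))) := by
  induction M with
  | nil => intro ys _ _ _ _ hc; exact hc
  | cons x M ih =>
      intro ys hOP horol hys hnodup hc
      simp only [List.map_cons] at hc ⊢
      have hx := hOP x (by simp)
      have hxr := horol x (by simp)
      have hOPM : ∀ y ∈ M.map (fun x => (x.1, x.2.2)), OutputPersistent y.1 := by
        intro y hy
        obtain ⟨z, hz, rfl⟩ := List.mem_map.mp hy
        exact (hOP z (List.mem_cons_of_mem _ hz)).1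
      have hselfM : ∀ y ∈ M.map (fun x => (x.1, x.2.2)), y.2 ∉ oroles y.1 := by
        intro y hy
        obtain ⟨z, hz, rfl⟩ := List.mem_map.mp hy
        have := horol z (List.mem_cons_of_mem _ hz)
        simp only [Finset.mem_union, not_or] at this
        exact this.1
      have hmapsnd : (M.map (fun x => (x.1, x.2.2))).map Prod.snd
          = M.map (fun x => x.2.2) := by
        rw [List.map_map]; rfl
      have h1 : Correct (composeC (ys ++ (x.2.1, x.2.2) :: M.map (fun x => (x.1, x.2.2)))) := by
        refine refine_one ys _ x.1 x.2.1 x.2.2 hx.2.2 hxr ?_ ?_ ?_ hc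
        · intro y hy
          rcases List.mem_append.mp hy with h | h
          · exact (hys y h).1
          · exact hOPM y h
        · intro y hy
          rcases List.mem_append.mp hy with h | h
          · exact (hys y h).2
          · exact hselfM y h
        · rw [hmapsnd]
          simpa using hnodup
      have h2 := ih (ys ++ [(x.2.1, x.2.2)])
        (fun z hz => hOP z (List.mem_cons_of_mem _ hz))
        (fun z hz => horol z (List.mem_cons_of_mem _ hz))
        (by
          intro y hy
          rcases List.mem_append.mp hy with h | h
          · exact hys y h
          · simp only [List.mem_singleton] at h
            subst h
            have := hxr
            simp only [Finset.mem_union, not_or] at this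
            exact ⟨hx.2.1, this.2⟩)
        (by
          rw [List.map_append]
          simpa [List.append_assoc] using hnodup)
        (by
          rw [List.append_assoc]
          simpa using h1)
      rw [List.append_assoc] at h2
      simpa using h2

/-! #### Role renaming (needed for transitivity of `⪯`) -/

/-- Rename output target roles in a contract. -/
def oren (σ : Role → Role) : Orc → Orc
  | .out a r => .out a (σ r)
  | .seq C D => .seq (oren σ C) (oren σ D)
  | .choice C D => .choice (oren σ C) (oren σ D)
  | .par C D => .par (oren σ C) (oren σ D)
  | .star C => .star (oren σ C)
  | C => C

def olren (σ : Role → Role) : OLabel → OLabel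
  | .out a r => .out a (σ r)
  | μ => μ

def sren (σ : Role → Role) : Sys → Sys
  | .atom C r => .atom (oren σ C) (σ r)
  | .par P Q => .par (sren σ P) (sren σ Q)

def slren (σ : Role → Role) : SLabel → SLabel
  | .tau => .tau
  | .inp a r => .inp a (σ r)
  | .out a r s => .out a (σ r) (σ s)
  | .comm a r s => .comm a (σ r) (σ s)
  | .tick => .tick

theorem olren_ne_tick {σ : Role → Role} {μ : OLabel} (h : μ ≠ .tick) :
    olren σ μ ≠ .tick := by cases μ <;> simp [olren] at *

theorem slren_ne_tick {σ : Role → Role} {μ : SLabel} (h : μ ≠ .tick) :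
    slren σ μ ≠ .tick := by cases μ <;> simp [slren] at *

theorem ostep_ren {σ : Role → Role} {C C' : Orc} {μ : OLabel}
    (h : OStep C μ C') : OStep (oren σ C) (olren σ μ) (oren σ C') := by
  induction h with
  | one => exact .one
  | tau => exact .tau
  | inp => exact .inp
  | out => exact .out
  | choiceL _ ih => exact .choiceL ih
  | choiceR _ ih => exact .choiceR ih
  | seqL _ hn ih => exact .seqL ih (olren_ne_tick hn)
  | seqTick _ _ ih1 ih2 => exact .seqTick ih1 ih2
  | parL _ hn ih => exact .parL ih (olren_ne_tick hn)
  | parR _ hn ih => exact .parR ih (olren_ne_tick hn)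
  | parTick _ _ ih1 ih2 => exact .parTick ih1 ih2
  | starTick => exact .starTick
  | starStep _ hn ih => exact .starStep ih (olren_ne_tick hn)

theorem sstep_ren {σ : Role → Role} {P P' : Sys} {μ : SLabel}
    (h : SStep P μ P') : SStep (sren σ P) (slren σ μ) (sren σ P') := by
  induction h with
  | atomTau h => exact .atomTau (ostep_ren h)
  | atomInp h => exact .atomInp (ostep_ren h)
  | atomOut h => exact .atomOut (ostep_ren h)
  | atomTick h => exact .atomTick (ostep_ren h)
  | parL _ hn ih => exact .parL ih (slren_ne_tick hn)
  | parR _ hn ih => exact .parR ih (slren_ne_tick hn)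
  | commLR _ _ ih1 ih2 => exact .commLR ih1 ih2
  | commRL _ _ ih1 ih2 => exact .commRL ih1 ih2
  | parTick _ _ ih1 ih2 => exact .parTick ih1 ih2

variable {σ : Role → Role}

theorem oren_oren (hσ : ∀ r, σ (σ r) = r) (C : Orc) : oren σ (oren σ C) = C := by
  induction C <;> simp [oren, hσ, *]

theorem sren_sren (hσ : ∀ r, σ (σ r) = r) (P : Sys) : sren σ (sren σ P) = P := by
  induction P <;> simp [sren, oren_oren hσ, hσ, *]

theorem completeStep_ren {P P' : Sys} (h : CompleteStep P P') :
    CompleteStep (sren σ P) (sren σ P') := by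
  rcases h with h | ⟨a, r, s, h⟩
  · exact Or.inl (sstep_ren h)
  · exact Or.inr ⟨a, σ r, σ s, sstep_ren h⟩

theorem reach_ren {P P' : Sys} (h : Reach P P') :
    Reach (sren σ P) (sren σ P') := by
  induction h with
  | refl P => exact .refl _
  | step h1 _ ih => exact .step (completeStep_ren h1) ih

theorem canTick_ren {P : Sys} (h : CanTick P) : CanTick (sren σ P) := by
  obtain ⟨P', h⟩ := h
  exact ⟨sren σ P', sstep_ren (σ := σ) h⟩

theorem correct_ren (hσ : ∀ r, σ (σ r) = r) {P : Sys} (hc : Correct P) :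
    Correct (sren σ P) := by
  intro Q hr
  have hr' : Reach P (sren σ Q) := by
    have := reach_ren (σ := σ) hr
    rwa [sren_sren hσ] at this
  obtain ⟨Q'', h1, h2⟩ := hc _ hr'
  refine ⟨sren σ Q'', ?_, canTick_ren h2⟩
  have := reach_ren (σ := σ) h1
  rwa [sren_sren hσ] at this

theorem oroles_ren (C : Orc) : oroles (oren σ C) = (oroles C).image σ := by
  induction C <;> simp [oren, oroles, Finset.image_union, *]

theorem oren_fix {C : Orc} (h : ∀ r ∈ oroles C, σ r = r) : oren σ C = C := by
  induction C with
  | out a r => simp [oren, h r (by simp [oroles])]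
  | seq C D ih1 ih2 =>
      simp only [oren]
      rw [ih1 fun r hr => h r (by simp [oroles, hr]),
        ih2 fun r hr => h r (by simp [oroles, hr])]
  | choice C D ih1 ih2 =>
      simp only [oren]
      rw [ih1 fun r hr => h r (by simp [oroles, hr]),
        ih2 fun r hr => h r (by simp [oroles, hr])]
  | par C D ih1 ih2 =>
      simp only [oren]
      rw [ih1 fun r hr => h r (by simp [oroles, hr]),
        ih2 fun r hr => h r (by simp [oroles, hr])]
  | star C ih => simp only [oren]; rw [ih fun r hr => h r (by simpa [oroles] using hr)]
  | _ => rfl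

theorem oreach_ren {C D : Orc} (h : OReach C D) :
    OReach (oren σ C) (oren σ D) := by
  induction h with
  | refl C => exact .refl _
  | step h1 _ ih => exact .step (ostep_ren h1) ih

theorem op_ren (hσ : ∀ r, σ (σ r) = r) {C : Orc}
    (h : OutputPersistent C) : OutputPersistent (oren σ C) := by
  intro C₂ hr a l hout
  have hr' : OReach C (oren σ C₂) := by
    have := oreach_ren (σ := σ) hr
    rwa [oren_oren hσ] at this
  obtain ⟨E, hE⟩ := hout
  have hout' : ∃ D, OStep (oren σ C₂) (.out a (σ l)) D :=
    ⟨oren σ E, ostep_ren hE⟩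
  obtain ⟨h1, h2⟩ := h _ hr' a (σ l) hout'
  constructor
  · rintro ⟨D, hD⟩
    exact h1 ⟨oren σ D, ostep_ren (σ := σ) hD⟩
  · intro μ C₃ hs hμ
    have hs' : OStep (oren σ C₂) (olren σ μ) (oren σ C₃) := ostep_ren hs
    have hμ' : olren σ μ ≠ .out a (σ l) := by
      cases μ with
      | out a' l' =>
          simp only [olren, ne_eq, OLabel.out.injEq, not_and]
          rintro rfl hσl
          exact hμ (by
            have : l' = l := by
              have := congrArg σ hσl
              rwa [hσ, hσ] at this
            rw [this])
      | tau => simp [olren]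
      | inp a' => simp [olren]
      | tick => simp [olren]
    obtain ⟨D, hD⟩ := h2 _ _ hs' hμ'
    have := ostep_ren (σ := σ) hD
    rw [oren_oren hσ] at this
    exact ⟨_, by simpa [olren, hσ] using this⟩

theorem allOP_ren (hσ : ∀ r, σ (σ r) = r) {P : Sys} (h : AllOP P) :
    AllOP (sren σ P) := by
  induction P with
  | atom C r => exact op_ren hσ h
  | par P Q ih1 ih2 => exact ⟨ih1 h.1, ih2 h.2⟩

theorem rolesList_ren (P : Sys) : rolesList (sren σ P) = (rolesList P).map σ := by
  induction P <;> simp [sren, rolesList, *]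

theorem noSelfOut_ren (hσ : ∀ r, σ (σ r) = r) {P : Sys} (h : NoSelfOut P) :
    NoSelfOut (sren σ P) := by
  have hinj : Function.Injective σ := Function.LeftInverse.injective hσ
  induction P with
  | atom C r =>
      show σ r ∉ oroles (oren σ C)
      rw [oroles_ren]
      intro hmem
      obtain ⟨s, hs, hss⟩ := Finset.mem_image.mp hmem
      exact h (by rwa [hinj hss] at hs)
  | par P Q ih1 ih2 => exact ⟨ih1 h.1, ih2 h.2⟩

/-! #### Transitivity of the subcontract relation -/

theorem subcontract_trans {C₁ C₂ C₃ : Orc}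
    (h12 : Subcontract C₁ C₂) (h23 : Subcontract C₂ C₃) :
    Subcontract C₁ C₃ := by
  intro l hl P hOP hWF hlP hc
  obtain ⟨l', hl'⟩ := Infinite.exists_notMem_finset
    (oroles C₁ ∪ oroles C₂ ∪ oroles C₃ ∪ (rolesList P).toFinset ∪ {l})
  simp only [Finset.mem_union, Finset.mem_singleton, not_or] at hl'
  obtain ⟨⟨⟨⟨h1', h2'⟩, h3'⟩, hP'⟩, hll'⟩ := hl'
  simp only [Finset.mem_union, not_or] at hl
  have hPl' : l' ∉ rolesList P := by
    intro h; exact hP' (List.mem_toFinset.mpr h)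
  -- the swap of l and l'
  set σ : Role → Role := fun r => if r = l then l' else if r = l' then l else r
    with hσdef
  have hσ : ∀ r, σ (σ r) = r := by
    intro r
    simp only [hσdef]
    by_cases h1 : r = l <;> by_cases h2 : r = l' <;> by_cases h3 : l = l' <;>
      simp_all
  have hσl : σ l = l' := by simp [hσdef]
  have hσl' : σ l' = l := by
    simp only [hσdef]
    by_cases h : l' = l <;> simp [h]
  have hinj : Function.Injective σ := Function.LeftInverse.injective hσ
  have hfix : ∀ (C : Orc), l ∉ oroles C → l' ∉ oroles C → oren σ C = C := by
    intro C hC hC'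
    refine oren_fix fun r hr => ?_
    simp only [hσdef]
    rw [if_neg (fun h : r = l => hC (h ▸ hr)), if_neg (fun h : r = l' => hC' (h ▸ hr))]
  -- rename the correct system
  have hc1 : Correct (.par (.atom C₃ l') (sren σ P)) := by
    have := correct_ren hσ hc
    simpa [sren, hσl, hfix C₃ hl.1 h3'] using this
  -- the renamed P is a valid test at l'
  have hOPσ : AllOP (sren σ P) := allOP_ren hσ hOP
  have hWFσ : WFSys (sren σ P) := by
    refine ⟨?_, noSelfOut_ren hσ hWF.2⟩
    rw [rolesList_ren]
    exact hWF.1.map hinj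
  have hlPσ : l' ∉ rolesList (sren σ P) := by
    rw [rolesList_ren]
    intro h
    obtain ⟨r, hr, hrr⟩ := List.mem_map.mp h
    rw [← hσl] at hrr
    exact hlP (hinj hrr ▸ hr)
  have hc2 : Correct (.par (.atom C₂ l') (sren σ P)) :=
    h23 l' (by simp [Finset.mem_union, h3', h2']) _ hOPσ hWFσ hlPσ hc1
  have hc3 : Correct (.par (.atom C₁ l') (sren σ P)) :=
    h12 l' (by simp [Finset.mem_union, h2', h1']) _ hOPσ hWFσ hlPσ hc2
  have := correct_ren hσ hc3
  simpa [sren, hσl', hfix C₁ hl.2 h1', sren_sren hσ] using this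


/-- The subcontract relation `⪯` over output persistent
contracts is an independent subcontract pre-order: it is a pre-order and, for
any `n ≥ 1`, output persistent contracts `C₁,…,Cₙ` and `C'₁,…,C'ₙ` with
`C'ᵢ ⪯ Cᵢ`, and pairwise distinct roles `lᵢ ∉ oroles(Cᵢ) ∪ oroles(C'ᵢ)`,
correctness of `[C₁]_{l₁} || … || [Cₙ]_{lₙ}` implies correctness of
`[C'₁]_{l₁} || … || [C'ₙ]_{lₙ}`. -/
theorem subcontract_is_independent_subcontract_preorder :
    IndepSubcontractPre Subcontract := by
  refine ⟨fun C _ => fun l hl P hP hW hlP hc => hc,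
    fun C₁ C₂ C₃ _ _ _ h12 h23 => subcontract_trans h12 h23, ?_⟩
  intro L _ hprops hnodup horoles hc
  have := refine_suffix L [] hprops horoles (by simp)
    (by simpa using hnodup) (by simpa using hc)
  simpa using this
end

section
/- The subcontract relation ⪯ is the maximal independent subcontract preorder over output persistent contracts: for every preorder ≤ over output persistent contracts that is an independent subcontract preorder, ≤ is included in ⪯, i.e. C' ≤ C implies C' ⪯ C. -/
/-! ### Auxiliary development: correctness is invariant under reassociation -/

/-- Flatten a system into its list of located components. -/
def flattenS : Sys → List (Orc × Role)
  | .atom C r => [(C, r)]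
  | .par P Q => flattenS P ++ flattenS Q

lemma flattenS_ne_nil : ∀ P, flattenS P ≠ []
  | .atom _ _ => by simp [flattenS]
  | .par P Q => by simp [flattenS, flattenS_ne_nil P]

/-- One component of a list performs a step. -/
inductive OneL : List (Orc × Role) → SLabel → List (Orc × Role) → Prop
  | hd : SStep (.atom C r) μ (.atom C' r) → OneL ((C,r)::L) μ ((C',r)::L)
  | tl : OneL L μ L' → OneL (x::L) μ (x::L')

/-- Two distinct components of a list synchronize on `a` from `r` to `s`. -/
inductive Comm2 : List (Orc × Role) → AName → Role → Role → List (Orc × Role) → Prop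
  | outHd : SStep (.atom C t) (.out a r s) (.atom C' t) → OneL L (.inp a s) L' →
      Comm2 ((C,t)::L) a r s ((C',t)::L')
  | inpHd : SStep (.atom C t) (.inp a s) (.atom C' t) → OneL L (.out a r s) L' →
      Comm2 ((C,t)::L) a r s ((C',t)::L')
  | tl : Comm2 L a r s L' → Comm2 (x::L) a r s (x::L')

/-- All components of a (nonempty) list perform `√`. -/
inductive TickAll : List (Orc × Role) → List (Orc × Role) → Prop
  | single : SStep (.atom C r) .tick (.atom C' r) → TickAll [(C,r)] [(C',r)]
  | cons : SStep (.atom C r) .tick (.atom C' r) → TickAll (x::L) M →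
      TickAll ((C,r)::x::L) ((C',r)::M)

/-- List-level semantics of systems. -/
inductive LStep : List (Orc × Role) → SLabel → List (Orc × Role) → Prop
  | one : OneL L μ L' → μ ≠ .tick → LStep L μ L'
  | comm : Comm2 L a r s L' → LStep L (.comm a r s) L'
  | tick : TickAll L L' → LStep L .tick L'

lemma OneL.appendR (h : OneL L μ L') (M) : OneL (L ++ M) μ (L' ++ M) := by
  induction h with
  | hd h => exact .hd h
  | tl _ ih => exact .tl ih

lemma OneL.appendL (h : OneL L μ L') : ∀ M, OneL (M ++ L) μ (M ++ L')
  | [] => h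
  | x :: M => .tl (h.appendL M)

lemma Comm2.appendR (h : Comm2 L a r s L') (M) : Comm2 (L ++ M) a r s (L' ++ M) := by
  induction h with
  | outHd h h2 => exact .outHd h (h2.appendR M)
  | inpHd h h2 => exact .inpHd h (h2.appendR M)
  | tl _ ih => exact .tl ih

lemma Comm2.appendL (h : Comm2 L a r s L') : ∀ M, Comm2 (M ++ L) a r s (M ++ L')
  | [] => h
  | x :: M => .tl (h.appendL M)

lemma TickAll.ne_nil (h : TickAll L L') : (∃ x T, L = x :: T) ∧ ∃ y T', L' = y :: T' := by
  cases h with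
  | single h => exact ⟨⟨_, _, rfl⟩, _, _, rfl⟩
  | cons h h2 => exact ⟨⟨_, _, rfl⟩, _, _, rfl⟩

lemma TickAll.append (h : TickAll L L') (h2 : TickAll M M') :
    TickAll (L ++ M) (L' ++ M') := by
  induction h with
  | single h =>
    obtain ⟨⟨x, T, rfl⟩, -⟩ := h2.ne_nil
    exact .cons h h2
  | cons h _ ih => exact .cons h ih

lemma comm2_of_out_inp_aux (hA : OneL A μ A') :
    ∀ a r s, μ = .out a r s → OneL B (.inp a s) B' → Comm2 (A ++ B) a r s (A' ++ B') := by
  induction hA with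
  | hd h => rintro a r s rfl hB; exact .outHd h (hB.appendL _)
  | tl _ ih => rintro a r s rfl hB; exact .tl (ih a r s rfl hB)

lemma comm2_of_out_inp (hA : OneL A (.out a r s) A') (hB : OneL B (.inp a s) B') :
    Comm2 (A ++ B) a r s (A' ++ B') := comm2_of_out_inp_aux hA a r s rfl hB

lemma comm2_of_inp_out_aux (hA : OneL A μ A') :
    ∀ a r s, μ = .inp a s → OneL B (.out a r s) B' → Comm2 (A ++ B) a r s (A' ++ B') := by
  induction hA with
  | hd h => rintro a r s rfl hB; exact .inpHd h (hB.appendL _)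
  | tl _ ih => rintro a r s rfl hB; exact .tl (ih a r s rfl hB)

lemma comm2_of_inp_out (hA : OneL A (.inp a s) A') (hB : OneL B (.out a r s) B') :
    Comm2 (A ++ B) a r s (A' ++ B') := comm2_of_inp_out_aux hA a r s rfl hB

lemma OneL.split : ∀ A, OneL (A ++ B) μ R →
    (∃ A', OneL A μ A' ∧ R = A' ++ B) ∨ (∃ B', OneL B μ B' ∧ R = A ++ B') := by
  intro A
  induction A generalizing R with
  | nil => intro h; exact .inr ⟨_, h, rfl⟩
  | cons x A ih =>
    intro h
    cases h with
    | hd h => exact .inl ⟨_, .hd h, rfl⟩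
    | tl h =>
      rcases ih h with ⟨A', h', rfl⟩ | ⟨B', h', rfl⟩
      · exact .inl ⟨_, .tl h', rfl⟩
      · exact .inr ⟨_, h', rfl⟩

lemma Comm2.split : ∀ A, Comm2 (A ++ B) a r s R →
    (∃ A', Comm2 A a r s A' ∧ R = A' ++ B) ∨
    (∃ B', Comm2 B a r s B' ∧ R = A ++ B') ∨
    (∃ A' B', OneL A (.out a r s) A' ∧ OneL B (.inp a s) B' ∧ R = A' ++ B') ∨
    (∃ A' B', OneL A (.inp a s) A' ∧ OneL B (.out a r s) B' ∧ R = A' ++ B') := by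
  intro A
  induction A generalizing R with
  | nil => intro h; exact .inr (.inl ⟨_, h, rfl⟩)
  | cons x A ih =>
    intro h
    cases h with
    | outHd h h2 =>
      rcases OneL.split A h2 with ⟨A', h', rfl⟩ | ⟨B', h', rfl⟩
      · exact .inl ⟨_, .outHd h h', rfl⟩
      · exact .inr (.inr (.inl ⟨_, _, .hd h, h', rfl⟩))
    | inpHd h h2 =>
      rcases OneL.split A h2 with ⟨A', h', rfl⟩ | ⟨B', h', rfl⟩
      · exact .inl ⟨_, .inpHd h h', rfl⟩
      · exact .inr (.inr (.inr ⟨_, _, .hd h, h', rfl⟩))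
    | tl h =>
      rcases ih h with ⟨A', h', rfl⟩ | ⟨B', h', rfl⟩ |
        ⟨A', B', h1, h2, rfl⟩ | ⟨A', B', h1, h2, rfl⟩
      · exact .inl ⟨_, .tl h', rfl⟩
      · exact .inr (.inl ⟨_, h', rfl⟩)
      · exact .inr (.inr (.inl ⟨_, _, .tl h1, h2, rfl⟩))
      · exact .inr (.inr (.inr ⟨_, _, .tl h1, h2, rfl⟩))

lemma TickAll.split : ∀ A, A ≠ [] → B ≠ [] → TickAll (A ++ B) R →
    ∃ A' B', TickAll A A' ∧ TickAll B B' ∧ R = A' ++ B'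
  | [], hA, _, _ => absurd rfl hA
  | [(C, t)], _, hB, h => by
    cases h with
    | single h => exact absurd rfl hB
    | cons h h2 => exact ⟨_, _, .single h, h2, rfl⟩
  | (C, t) :: y :: A, _, hB, h => by
    cases h with
    | cons h h2 =>
      obtain ⟨A', B', hA', hB', rfl⟩ := TickAll.split (y :: A) (by simp) hB h2
      exact ⟨_, _, .cons h hA', hB', rfl⟩

lemma lstep_fwd (h : SStep P μ P') : LStep (flattenS P) μ (flattenS P') := by
  induction h with
  | atomTau h => exact .one (.hd (.atomTau h)) (by simp)
  | atomInp h => exact .one (.hd (.atomInp h)) (by simp)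
  | atomOut h => exact .one (.hd (.atomOut h)) (by simp)
  | atomTick h => exact .tick (.single (.atomTick h))
  | parL h hne ih =>
    cases ih with
    | one h1 h2 => exact .one (h1.appendR _) h2
    | comm h1 => exact .comm (h1.appendR _)
    | tick h1 => exact absurd rfl hne
  | parR h hne ih =>
    cases ih with
    | one h1 h2 => exact .one (h1.appendL _) h2
    | comm h1 => exact .comm (h1.appendL _)
    | tick h1 => exact absurd rfl hne
  | commLR h1 h2 ih1 ih2 =>
    cases ih1 with
    | one g1 _ =>
      cases ih2 with
      | one g2 _ => exact .comm (comm2_of_out_inp g1 g2)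
  | commRL h1 h2 ih1 ih2 =>
    cases ih1 with
    | one g1 _ =>
      cases ih2 with
      | one g2 _ => exact .comm (comm2_of_inp_out g1 g2)
  | parTick h1 h2 ih1 ih2 =>
    cases ih1 with
    | one _ hne => exact absurd rfl hne
    | tick g1 =>
      cases ih2 with
      | one _ hne => exact absurd rfl hne
      | tick g2 => exact .tick (g1.append g2)

lemma lstep_bwd : ∀ P μ R, LStep (flattenS P) μ R →
    ∃ P', SStep P μ P' ∧ flattenS P' = R
  | .atom C t, μ, R, h => by
    cases h with
    | one h hne =>
      cases h with
      | hd h => exact ⟨_, h, rfl⟩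
      | tl h => cases h
    | comm h =>
      cases h with
      | outHd h h2 => cases h2
      | inpHd h h2 => cases h2
      | tl h => cases h
    | tick h =>
      cases h with
      | single h => exact ⟨_, h, rfl⟩
  | .par P Q, μ, R, h => by
    cases h with
    | one h hne =>
      rcases OneL.split _ h with ⟨A', h', rfl⟩ | ⟨B', h', rfl⟩
      · obtain ⟨P', hs, rfl⟩ := lstep_bwd P μ A' (.one h' hne)
        exact ⟨_, .parL hs hne, rfl⟩
      · obtain ⟨Q', hs, rfl⟩ := lstep_bwd Q μ B' (.one h' hne)
        exact ⟨_, .parR hs hne, rfl⟩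
    | comm h =>
      rcases Comm2.split _ h with ⟨A', h', rfl⟩ | ⟨B', h', rfl⟩ |
        ⟨A', B', h1, h2, rfl⟩ | ⟨A', B', h1, h2, rfl⟩
      · obtain ⟨P', hs, rfl⟩ := lstep_bwd P _ A' (.comm h')
        exact ⟨_, .parL hs (by simp), rfl⟩
      · obtain ⟨Q', hs, rfl⟩ := lstep_bwd Q _ B' (.comm h')
        exact ⟨_, .parR hs (by simp), rfl⟩
      · obtain ⟨P', hs1, rfl⟩ := lstep_bwd P _ A' (.one h1 (by simp))
        obtain ⟨Q', hs2, rfl⟩ := lstep_bwd Q _ B' (.one h2 (by simp))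
        exact ⟨_, .commLR hs1 hs2, rfl⟩
      · obtain ⟨P', hs1, rfl⟩ := lstep_bwd P _ A' (.one h1 (by simp))
        obtain ⟨Q', hs2, rfl⟩ := lstep_bwd Q _ B' (.one h2 (by simp))
        exact ⟨_, .commRL hs1 hs2, rfl⟩
    | tick h =>
      obtain ⟨A', B', hA, hB, rfl⟩ :=
        TickAll.split _ (flattenS_ne_nil P) (flattenS_ne_nil Q) h
      obtain ⟨P', hs1, rfl⟩ := lstep_bwd P _ A' (.tick hA)
      obtain ⟨Q', hs2, rfl⟩ := lstep_bwd Q _ B' (.tick hB)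
      exact ⟨_, .parTick hs1 hs2, rfl⟩

lemma sys_bisim (he : flattenS P = flattenS Q) (h : SStep P μ P') :
    ∃ Q', SStep Q μ Q' ∧ flattenS P' = flattenS Q' := by
  have h1 := lstep_fwd h
  rw [he] at h1
  obtain ⟨Q', hs, hf⟩ := lstep_bwd Q _ _ h1
  exact ⟨Q', hs, hf.symm⟩

lemma reach_transfer (h : Reach P P') : ∀ Q, flattenS P = flattenS Q →
    ∃ Q', Reach Q Q' ∧ flattenS P' = flattenS Q' := by
  induction h with
  | refl P => exact fun Q he => ⟨Q, .refl Q, he⟩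
  | @step P P₁ P' hs _ ih =>
    intro Q he
    rcases hs with hs | ⟨a, r, s, hs⟩
    · obtain ⟨Q₁, hsQ, he₁⟩ := sys_bisim he hs
      obtain ⟨Q', hR, he'⟩ := ih Q₁ he₁
      exact ⟨Q', .step (.inl hsQ) hR, he'⟩
    · obtain ⟨Q₁, hsQ, he₁⟩ := sys_bisim he hs
      obtain ⟨Q', hR, he'⟩ := ih Q₁ he₁
      exact ⟨Q', .step (.inr ⟨a, r, s, hsQ⟩) hR, he'⟩

lemma canTick_transfer (he : flattenS P = flattenS Q) (h : CanTick P) : CanTick Q := by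
  obtain ⟨P', hs⟩ := h
  obtain ⟨Q', hs', -⟩ := sys_bisim he hs
  exact ⟨Q', hs'⟩

lemma correct_transfer (he : flattenS P = flattenS Q) (hC : Correct P) : Correct Q := by
  intro Q' hR
  obtain ⟨P', hRP, he'⟩ := reach_transfer hR P he.symm
  obtain ⟨P'', hR2, hT⟩ := hC P' hRP
  obtain ⟨Q'', hRQ, he''⟩ := reach_transfer hR2 Q' he'.symm
  exact ⟨Q'', hRQ, canTick_transfer he'' hT⟩

lemma flattenS_composeC : ∀ L : List (Orc × Role), L ≠ [] → flattenS (composeC L) = L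
  | [(C, r)], _ => rfl
  | (C, r) :: x :: xs, _ => by
    simp [composeC, flattenS, flattenS_composeC (x :: xs) (by simp)]

lemma mem_flattenS_op : ∀ P, AllOP P → ∀ x ∈ flattenS P, OutputPersistent x.1
  | .atom C r, h, x, hx => by
    simp [flattenS] at hx; subst hx; exact h
  | .par P Q, h, x, hx => by
    simp only [flattenS, List.mem_append] at hx
    rcases hx with hx | hx
    · exact mem_flattenS_op P h.1 x hx
    · exact mem_flattenS_op Q h.2 x hx

lemma mem_flattenS_noself : ∀ P, NoSelfOut P → ∀ x ∈ flattenS P, x.2 ∉ oroles x.1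
  | .atom C r, h, x, hx => by
    simp [flattenS] at hx; subst hx; exact h
  | .par P Q, h, x, hx => by
    simp only [flattenS, List.mem_append] at hx
    rcases hx with hx | hx
    · exact mem_flattenS_noself P h.1 x hx
    · exact mem_flattenS_noself Q h.2 x hx

lemma map_snd_flattenS : ∀ P, (flattenS P).map Prod.snd = rolesList P
  | .atom C r => rfl
  | .par P Q => by
    simp [flattenS, rolesList, map_snd_flattenS P, map_snd_flattenS Q]


/-- The subcontract relation `⪯` is the maximal independent
subcontract pre-order over output persistent contracts: every independent
subcontract pre-order `≤` is included in `⪯`. -/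
theorem subcontract_maximal (le : Orc → Orc → Prop)
    (hle : IndepSubcontractPre le) :
    ∀ C' C : Orc, OutputPersistent C' → OutputPersistent C →
      le C' C → Subcontract C' C := by
  obtain ⟨hrefl, -, hcomp⟩ := hle
  intro C' C hC' hC hlt
  intro l hl P hOP hWF hlP hCorr
  set L : List (Orc × Orc × Role) :=
    (C, C', l) :: (flattenS P).map (fun p => (p.1, p.1, p.2)) with hL
  have hmaps : ∀ M : List (Orc × Role),
      ((M.map fun p => (p.1, p.1, p.2)).map
        (fun x : Orc × Orc × Role => (x.1, x.2.2)) = M) ∧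
      ((M.map fun p => (p.1, p.1, p.2)).map
        (fun x : Orc × Orc × Role => (x.2.1, x.2.2)) = M) ∧
      ((M.map fun p => (p.1, p.1, p.2)).map
        (fun x : Orc × Orc × Role => x.2.2) = M.map Prod.snd) := by
    intro M
    induction M with
    | nil => exact ⟨rfl, rfl, rfl⟩
    | cons p M ih => simp_all
  have hmap1 : L.map (fun x => (x.1, x.2.2)) = (C, l) :: flattenS P := by
    simp only [hL, List.map_cons, (hmaps _).1]
  have hmap2 : L.map (fun x => (x.2.1, x.2.2)) = (C', l) :: flattenS P := by
    simp only [hL, List.map_cons, (hmaps _).2.1]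
  have hroles : L.map (fun x => x.2.2) = l :: rolesList P := by
    simp only [hL, List.map_cons, (hmaps _).2.2, map_snd_flattenS P]
  have key := hcomp L (by simp [hL])
    (by
      intro x hx
      simp only [hL, List.mem_cons, List.mem_map] at hx
      rcases hx with rfl | ⟨p, hp, rfl⟩
      · exact ⟨hC, hC', hlt⟩
      · have := mem_flattenS_op P hOP p hp
        exact ⟨this, this, hrefl _ this⟩)
    (by rw [hroles]; exact List.nodup_cons.mpr ⟨hlP, hWF.1⟩)
    (by
      intro x hx
      simp only [hL, List.mem_cons, List.mem_map] at hx
      rcases hx with rfl | ⟨p, hp, rfl⟩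
      · exact hl
      · have := mem_flattenS_noself P hWF.2 p hp
        simpa [Finset.mem_union] using this)
  rw [hmap1, hmap2] at key
  have hne : flattenS P ≠ [] := flattenS_ne_nil P
  have e1 : flattenS (Sys.par (.atom C l) P) = flattenS (composeC ((C, l) :: flattenS P)) := by
    rw [flattenS_composeC _ (by simp)]; rfl
  have e2 : flattenS (composeC ((C', l) :: flattenS P)) = flattenS (Sys.par (.atom C' l) P) := by
    rw [flattenS_composeC _ (by simp)]; rfl
  exact correct_transfer e2 (key (correct_transfer e1 hCorr))
end

section
/- For all output persistent contracts C and C': C' \\ (I(C') − I(C)) ⪯ C if and only if C' ⪯ C, where C \\ M replaces every input on a name in M occurring in C by 0 and I(C) is the set of input action names syntactically occurring in C. -/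
/-! ### Auxiliary lemmas for Statement 3 -/

section Aux

theorem Reach.trans {P Q R : Sys} (h1 : Reach P Q) (h2 : Reach Q R) : Reach P R := by
  induction h1 with
  | refl => exact h2
  | step hs _ ih => exact Reach.step hs (ih h2)

theorem Reach.single {P Q : Sys} (h : CompleteStep P Q) : Reach P Q :=
  Reach.step h (Reach.refl Q)

theorem correct_reach {P Q : Sys} (h : Correct P) (hr : Reach P Q) : Correct Q :=
  fun R hR => h R (hr.trans hR)

theorem ostep_inames {D : Orc} {μ : OLabel} {D' : Orc} (h : OStep D μ D') :
    inames D' ⊆ inames D := by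
  induction h with
  | one => simp [inames]
  | tau => simp [inames]
  | inp => simp [inames]
  | out => simp [inames]
  | choiceL _ ih => exact ih.trans (by simp [inames])
  | choiceR _ ih => exact ih.trans (by simp [inames])
  | seqL _ _ ih => simpa [inames] using Finset.union_subset_union ih (Finset.Subset.refl _)
  | seqTick _ _ _ ih2 => exact ih2.trans (by simp [inames])
  | parL _ _ ih => simpa [inames] using Finset.union_subset_union ih (Finset.Subset.refl _)
  | parR _ _ ih => simpa [inames] using Finset.union_subset_union (Finset.Subset.refl _) ih
  | parTick _ _ ih1 ih2 => simpa [inames] using Finset.union_subset_union ih1 ih2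
  | starTick => simp [inames]
  | starStep _ _ ih =>
      simp only [inames]
      exact Finset.union_subset ih (Finset.Subset.refl _)

theorem ostep_inp_inames {D : Orc} {a : AName} {D' : Orc} (h : OStep D (.inp a) D') :
    a ∈ inames D := by
  generalize hμ : OLabel.inp a = μ at h
  induction h with
  | one => cases hμ
  | tau => cases hμ
  | inp => cases hμ; simp [inames]
  | out => cases hμ
  | choiceL _ ih => simp only [inames, Finset.mem_union]; exact Or.inl (ih hμ)
  | choiceR _ ih => simp only [inames, Finset.mem_union]; exact Or.inr (ih hμ)
  | seqL _ _ ih => simp only [inames, Finset.mem_union]; exact Or.inl (ih hμ)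
  | seqTick _ _ _ ih2 => simp only [inames, Finset.mem_union]; exact Or.inr (ih2 hμ)
  | parL _ _ ih => simp only [inames, Finset.mem_union]; exact Or.inl (ih hμ)
  | parR _ _ ih => simp only [inames, Finset.mem_union]; exact Or.inr (ih hμ)
  | parTick => cases hμ
  | starTick => cases hμ
  | starStep _ _ ih => simp only [inames]; exact ih hμ

theorem op_ostep {D : Orc} {μ : OLabel} {D' : Orc} (h : OutputPersistent D)
    (hs : OStep D μ D') : OutputPersistent D' :=
  fun E hE => h E (OReach.step hs hE)

/-! #### Restriction of inputs -/

theorem oroles_restrict (D : Orc) (M : Finset AName) : oroles (restrict D M) = oroles D := by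
  induction D with
  | zero => rfl
  | one => rfl
  | tau => rfl
  | inp a => simp only [restrict]; split <;> rfl
  | out a l => rfl
  | seq C D ih1 ih2 => simp [restrict, oroles, ih1, ih2]
  | choice C D ih1 ih2 => simp [restrict, oroles, ih1, ih2]
  | par C D ih1 ih2 => simp [restrict, oroles, ih1, ih2]
  | star C ih => simp [restrict, oroles, ih]

theorem inames_restrict {a : AName} {M : Finset AName} (ha : a ∈ M) (D : Orc) :
    a ∉ inames (restrict D M) := by
  induction D with
  | zero => simp [restrict, inames]
  | one => simp [restrict, inames]
  | tau => simp [restrict, inames]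
  | inp b =>
      simp only [restrict]
      split
      · simp [inames]
      · simp only [inames, Finset.mem_singleton]
        rintro rfl; exact ‹¬ a ∈ M› ha
  | out b l => simp [restrict, inames]
  | seq C D ih1 ih2 => simp [restrict, inames, ih1, ih2]
  | choice C D ih1 ih2 => simp [restrict, inames, ih1, ih2]
  | par C D ih1 ih2 => simp [restrict, inames, ih1, ih2]
  | star C ih => simpa [restrict, inames] using ih

theorem restrict_fwd {D : Orc} {μ : OLabel} {D' : Orc} {M : Finset AName}
    (h : OStep D μ D') (hμ : ∀ a ∈ M, μ ≠ .inp a) :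
    OStep (restrict D M) μ (restrict D' M) := by
  induction h with
  | @one => exact OStep.one
  | tau => exact OStep.tau
  | @inp a =>
      have : a ∉ M := fun hm => hμ a hm rfl
      simp only [restrict, if_neg this]
      exact OStep.inp
  | out => exact OStep.out
  | choiceL h ih => exact OStep.choiceL (ih hμ)
  | choiceR h ih => exact OStep.choiceR (ih hμ)
  | seqL h hne ih => exact OStep.seqL (ih hμ) hne
  | seqTick h1 h2 ih1 ih2 =>
      exact OStep.seqTick (ih1 (by rintro a _ ⟨⟩)) (ih2 hμ)
  | parL h hne ih => exact OStep.parL (ih hμ) hne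
  | parR h hne ih => exact OStep.parR (ih hμ) hne
  | parTick h1 h2 ih1 ih2 =>
      exact OStep.parTick (ih1 (by rintro a _ ⟨⟩)) (ih2 (by rintro a _ ⟨⟩))
  | starTick => exact OStep.starTick
  | starStep h hne ih => exact OStep.starStep (ih hμ) hne

theorem restrict_bwd {D : Orc} {μ : OLabel} {E : Orc} {M : Finset AName}
    (h : OStep (restrict D M) μ E) :
    ∃ D', OStep D μ D' ∧ E = restrict D' M ∧ ∀ a ∈ M, μ ≠ .inp a := by
  induction D generalizing μ E with
  | zero => simp only [restrict] at h; cases h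
  | one =>
      simp only [restrict] at h; cases h
      exact ⟨.zero, OStep.one, rfl, by rintro a _ ⟨⟩⟩
  | tau =>
      simp only [restrict] at h; cases h
      exact ⟨.one, OStep.tau, rfl, by rintro a _ ⟨⟩⟩
  | inp b =>
      simp only [restrict] at h
      split at h
      · cases h
      · cases h
        exact ⟨.one, OStep.inp, rfl, by
          rintro a ha ⟨⟩; exact ‹¬ b ∈ M› ha⟩
  | out b l =>
      simp only [restrict] at h; cases h
      exact ⟨.one, OStep.out, rfl, by rintro a _ ⟨⟩⟩
  | seq C D ih1 ih2 =>
      simp only [restrict] at h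
      cases h with
      | seqL h hne =>
          obtain ⟨C', hC, rfl, hμ⟩ := ih1 h
          exact ⟨.seq C' D, OStep.seqL hC hne, rfl, hμ⟩
      | seqTick h1 h2 =>
          obtain ⟨C', hC, _, _⟩ := ih1 h1
          obtain ⟨D', hD, rfl, hμ⟩ := ih2 h2
          exact ⟨D', OStep.seqTick hC hD, rfl, hμ⟩
  | choice C D ih1 ih2 =>
      simp only [restrict] at h
      cases h with
      | choiceL h =>
          obtain ⟨C', hC, rfl, hμ⟩ := ih1 h
          exact ⟨C', OStep.choiceL hC, rfl, hμ⟩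
      | choiceR h =>
          obtain ⟨D', hD, rfl, hμ⟩ := ih2 h
          exact ⟨D', OStep.choiceR hD, rfl, hμ⟩
  | par C D ih1 ih2 =>
      simp only [restrict] at h
      cases h with
      | parL h hne =>
          obtain ⟨C', hC, rfl, hμ⟩ := ih1 h
          exact ⟨.par C' D, OStep.parL hC hne, rfl, hμ⟩
      | parR h hne =>
          obtain ⟨D', hD, rfl, hμ⟩ := ih2 h
          exact ⟨.par C D', OStep.parR hD hne, rfl, hμ⟩
      | parTick h1 h2 =>
          obtain ⟨C', hC, rfl, _⟩ := ih1 h1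
          obtain ⟨D', hD, rfl, _⟩ := ih2 h2
          exact ⟨.par C' D', OStep.parTick hC hD, rfl, by rintro a _ ⟨⟩⟩
  | star C ih =>
      simp only [restrict] at h
      cases h with
      | starTick => exact ⟨.zero, OStep.starTick, rfl, by rintro a _ ⟨⟩⟩
      | starStep h hne =>
          obtain ⟨C', hC, rfl, hμ⟩ := ih h
          exact ⟨.seq C' (.star C), OStep.starStep hC hne, rfl, hμ⟩

/-! #### Restriction of outputs directed to a given role -/

/-- Replace every output `ā_l` with `a ∈ M` occurring in `C` by `0`. -/
def orestrict (C : Orc) (M : Finset AName) (l : Role) : Orc :=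
  match C with
  | .out a s => if a ∈ M ∧ s = l then .zero else .out a s
  | .seq C D => .seq (orestrict C M l) (orestrict D M l)
  | .choice C D => .choice (orestrict C M l) (orestrict D M l)
  | .par C D => .par (orestrict C M l) (orestrict D M l)
  | .star C => .star (orestrict C M l)
  | C => C

theorem oroles_orestrict (D : Orc) (M : Finset AName) (l : Role) :
    oroles (orestrict D M l) ⊆ oroles D := by
  induction D with
  | zero => simp [orestrict, oroles]
  | one => simp [orestrict, oroles]
  | tau => simp [orestrict, oroles]
  | inp a => simp [orestrict, oroles]
  | out a s =>
      simp only [orestrict]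
      split
      · simp [oroles]
      · exact Finset.Subset.refl _
  | seq C D ih1 ih2 => simpa [orestrict, oroles] using Finset.union_subset_union ih1 ih2
  | choice C D ih1 ih2 => simpa [orestrict, oroles] using Finset.union_subset_union ih1 ih2
  | par C D ih1 ih2 => simpa [orestrict, oroles] using Finset.union_subset_union ih1 ih2
  | star C ih => simpa [orestrict, oroles] using ih

theorem orestrict_fwd {D : Orc} {μ : OLabel} {D' : Orc} {M : Finset AName} {l : Role}
    (h : OStep D μ D') (hμ : ∀ a ∈ M, μ ≠ .out a l) :
    OStep (orestrict D M l) μ (orestrict D' M l) := by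
  induction h with
  | one => exact OStep.one
  | tau => exact OStep.tau
  | inp => exact OStep.inp
  | @out a s =>
      have : ¬ (a ∈ M ∧ s = l) := by
        rintro ⟨hm, rfl⟩; exact hμ a hm rfl
      simp only [orestrict, if_neg this]
      exact OStep.out
  | choiceL h ih => exact OStep.choiceL (ih hμ)
  | choiceR h ih => exact OStep.choiceR (ih hμ)
  | seqL h hne ih => exact OStep.seqL (ih hμ) hne
  | seqTick h1 h2 ih1 ih2 =>
      exact OStep.seqTick (ih1 (by rintro a _ ⟨⟩)) (ih2 hμ)
  | parL h hne ih => exact OStep.parL (ih hμ) hne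
  | parR h hne ih => exact OStep.parR (ih hμ) hne
  | parTick h1 h2 ih1 ih2 =>
      exact OStep.parTick (ih1 (by rintro a _ ⟨⟩)) (ih2 (by rintro a _ ⟨⟩))
  | starTick => exact OStep.starTick
  | starStep h hne ih => exact OStep.starStep (ih hμ) hne

theorem orestrict_bwd {D : Orc} {μ : OLabel} {E : Orc} {M : Finset AName} {l : Role}
    (h : OStep (orestrict D M l) μ E) :
    ∃ D', OStep D μ D' ∧ E = orestrict D' M l ∧ ∀ a ∈ M, μ ≠ .out a l := by
  induction D generalizing μ E with
  | zero => simp only [orestrict] at h; cases h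
  | one =>
      simp only [orestrict] at h; cases h
      exact ⟨.zero, OStep.one, rfl, by rintro a _ ⟨⟩⟩
  | tau =>
      simp only [orestrict] at h; cases h
      exact ⟨.one, OStep.tau, rfl, by rintro a _ ⟨⟩⟩
  | inp b =>
      simp only [orestrict] at h; cases h
      exact ⟨.one, OStep.inp, rfl, by rintro a _ ⟨⟩⟩
  | out b s =>
      simp only [orestrict] at h
      split at h
      · cases h
      · rename_i hns
        cases h
        refine ⟨.one, OStep.out, rfl, ?_⟩
        intro a ha heq
        cases heq
        exact hns ⟨ha, rfl⟩
  | seq C D ih1 ih2 =>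
      simp only [orestrict] at h
      cases h with
      | seqL h hne =>
          obtain ⟨C', hC, rfl, hμ⟩ := ih1 h
          exact ⟨.seq C' D, OStep.seqL hC hne, rfl, hμ⟩
      | seqTick h1 h2 =>
          obtain ⟨C', hC, _, _⟩ := ih1 h1
          obtain ⟨D', hD, rfl, hμ⟩ := ih2 h2
          exact ⟨D', OStep.seqTick hC hD, rfl, hμ⟩
  | choice C D ih1 ih2 =>
      simp only [orestrict] at h
      cases h with
      | choiceL h =>
          obtain ⟨C', hC, rfl, hμ⟩ := ih1 h
          exact ⟨C', OStep.choiceL hC, rfl, hμ⟩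
      | choiceR h =>
          obtain ⟨D', hD, rfl, hμ⟩ := ih2 h
          exact ⟨D', OStep.choiceR hD, rfl, hμ⟩
  | par C D ih1 ih2 =>
      simp only [orestrict] at h
      cases h with
      | parL h hne =>
          obtain ⟨C', hC, rfl, hμ⟩ := ih1 h
          exact ⟨.par C' D, OStep.parL hC hne, rfl, hμ⟩
      | parR h hne =>
          obtain ⟨D', hD, rfl, hμ⟩ := ih2 h
          exact ⟨.par C D', OStep.parR hD hne, rfl, hμ⟩
      | parTick h1 h2 =>
          obtain ⟨C', hC, rfl, _⟩ := ih1 h1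
          obtain ⟨D', hD, rfl, _⟩ := ih2 h2
          exact ⟨.par C' D', OStep.parTick hC hD, rfl, by rintro a _ ⟨⟩⟩
  | star C ih =>
      simp only [orestrict] at h
      cases h with
      | starTick => exact ⟨.zero, OStep.starTick, rfl, by rintro a _ ⟨⟩⟩
      | starStep h hne =>
          obtain ⟨C', hC, rfl, hμ⟩ := ih h
          exact ⟨.seq C' (.star C), OStep.starStep hC hne, rfl, hμ⟩

theorem oreach_orestrict_bwd {D E : Orc} {M : Finset AName} {l : Role}
    (h : OReach (orestrict D M l) E) :
    ∃ D₀, OReach D D₀ ∧ E = orestrict D₀ M l := by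
  generalize hD : orestrict D M l = D₁ at h
  induction h generalizing D with
  | refl C => exact ⟨D, OReach.refl D, hD.symm⟩
  | step hs _ ih =>
      subst hD
      obtain ⟨D', hD', rfl, _⟩ := orestrict_bwd hs
      obtain ⟨D₀, hr, rfl⟩ := ih rfl
      exact ⟨D₀, OReach.step hD' hr, rfl⟩

theorem op_orestrict {D : Orc} {M : Finset AName} {l : Role}
    (h : OutputPersistent D) : OutputPersistent (orestrict D M l) := by
  intro E hE a s hout
  obtain ⟨D₀, hr, rfl⟩ := oreach_orestrict_bwd hE
  obtain ⟨F, hF⟩ := hout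
  obtain ⟨F', hF', _, hcond⟩ := orestrict_bwd hF
  have hOP := h D₀ hr a s ⟨F', hF'⟩
  constructor
  · rintro ⟨G, hG⟩
    obtain ⟨G', hG', _, _⟩ := orestrict_bwd hG
    exact hOP.1 ⟨G', hG'⟩
  · intro μ E'' hstep hne
    obtain ⟨D'', hD'', rfl, _⟩ := orestrict_bwd hstep
    obtain ⟨G, hG⟩ := hOP.2 μ D'' hD'' hne
    exact ⟨orestrict G M l, orestrict_fwd hG hcond⟩

/-! #### System-level lemmas -/

theorem sstep_rolesList {Q : Sys} {μ : SLabel} {Q' : Sys} (h : SStep Q μ Q') :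
    rolesList Q' = rolesList Q := by
  induction h with
  | atomTau _ => rfl
  | atomInp _ => rfl
  | atomOut _ => rfl
  | atomTick _ => rfl
  | parL _ _ ih => simp [rolesList, ih]
  | parR _ _ ih => simp [rolesList, ih]
  | commLR _ _ ih1 ih2 => simp [rolesList, ih1, ih2]
  | commRL _ _ ih1 ih2 => simp [rolesList, ih1, ih2]
  | parTick _ _ ih1 ih2 => simp [rolesList, ih1, ih2]

theorem sstep_inp_role {Q : Sys} {a : AName} {s : Role} {Q' : Sys}
    (h : SStep Q (.inp a s) Q') : s ∈ rolesList Q := by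
  generalize hμ : SLabel.inp a s = μ at h
  induction h with
  | atomTau _ => cases hμ
  | atomInp _ => cases hμ; simp [rolesList]
  | atomOut _ => cases hμ
  | atomTick _ => cases hμ
  | parL _ _ ih => simp only [rolesList, List.mem_append]; exact Or.inl (ih hμ)
  | parR _ _ ih => simp only [rolesList, List.mem_append]; exact Or.inr (ih hμ)
  | commLR _ _ _ _ => cases hμ
  | commRL _ _ _ _ => cases hμ
  | parTick _ _ _ _ => cases hμ

theorem allop_sstep {Q : Sys} {μ : SLabel} {Q' : Sys} (hop : AllOP Q)
    (h : SStep Q μ Q') : AllOP Q' := by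
  induction h with
  | atomTau h => exact op_ostep hop h
  | atomInp h => exact op_ostep hop h
  | atomOut h => exact op_ostep hop h
  | atomTick h => exact op_ostep hop h
  | parL _ _ ih => exact ⟨ih hop.1, hop.2⟩
  | parR _ _ ih => exact ⟨hop.1, ih hop.2⟩
  | commLR _ _ ih1 ih2 => exact ⟨ih1 hop.1, ih2 hop.2⟩
  | commRL _ _ ih1 ih2 => exact ⟨ih1 hop.1, ih2 hop.2⟩
  | parTick _ _ ih1 ih2 => exact ⟨ih1 hop.1, ih2 hop.2⟩

/-- `Q` enables an output `ā` directed to role `l`. -/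
def EnOut (Q : Sys) (a : AName) (l : Role) : Prop :=
  ∃ r Q', SStep Q (.out a r l) Q'

theorem enout_notick {Q : Sys} {a : AName} {l : Role} (hop : AllOP Q)
    (hen : EnOut Q a l) {Q'' : Sys} (ht : SStep Q .tick Q'') : False := by
  induction Q generalizing Q'' with
  | atom D r =>
      obtain ⟨r', Q', hQ'⟩ := hen
      cases hQ' with
      | atomOut hout =>
          cases ht with
          | atomTick htick =>
              exact (hop D (OReach.refl D) a l ⟨_, hout⟩).1 ⟨_, htick⟩
  | par Q1 Q2 ih1 ih2 =>
      cases ht with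
      | parL _ hne => exact absurd rfl hne
      | parR _ hne => exact absurd rfl hne
      | parTick h1 h2 =>
          obtain ⟨r', Q', hQ'⟩ := hen
          cases hQ' with
          | parL hs _ => exact ih1 hop.1 ⟨_, _, hs⟩ h1
          | parR hs _ => exact ih2 hop.2 ⟨_, _, hs⟩ h2

theorem enout_persist {Q : Sys} {a : AName} {l : Role} (hop : AllOP Q)
    (hl : l ∉ rolesList Q) (hen : EnOut Q a l) {μ : SLabel} {Q' : Sys}
    (hs : SStep Q μ Q') (hout : ∀ r, μ ≠ .out a r l) (htick : μ ≠ .tick) :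
    EnOut Q' a l := by
  induction Q generalizing μ Q' with
  | atom D r =>
      obtain ⟨r', Qx, hQx⟩ := hen
      cases hQx with
      | atomOut ho =>
        have hOP := hop D (OReach.refl D) a l ⟨_, ho⟩
        cases hs with
        | atomTau h =>
            obtain ⟨F, hF⟩ := hOP.2 _ _ h (by rintro ⟨⟩)
            exact ⟨r, _, SStep.atomOut hF⟩
        | atomInp h =>
            obtain ⟨F, hF⟩ := hOP.2 _ _ h (by rintro ⟨⟩)
            exact ⟨r, _, SStep.atomOut hF⟩
        | atomOut h =>
            rename_i b s _
            have hne : OLabel.out b s ≠ OLabel.out a l := by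
              intro heq; cases heq; exact hout r rfl
            obtain ⟨F, hF⟩ := hOP.2 _ _ h hne
            exact ⟨r, _, SStep.atomOut hF⟩
        | atomTick h => exact absurd rfl htick
  | par Q1 Q2 ih1 ih2 =>
      have hl1 : l ∉ rolesList Q1 := fun h => hl (by simp [rolesList, h])
      have hl2 : l ∉ rolesList Q2 := fun h => hl (by simp [rolesList, h])
      obtain ⟨r', Qx, hQx⟩ := hen
      cases hQx with
      | parL hs1 _ =>
          cases hs with
          | parL h hne =>
              obtain ⟨r'', Q'', hh⟩ := ih1 hop.1 hl1 ⟨_, _, hs1⟩ h hout htick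
              exact ⟨r'', _, SStep.parL hh (by rintro ⟨⟩)⟩
          | parR h hne => exact ⟨r', _, SStep.parL hs1 (by rintro ⟨⟩)⟩
          | commLR hP hQ =>
              have hsr := sstep_inp_role hQ
              have hsl : _ ≠ l := fun h => hl2 (h ▸ hsr)
              obtain ⟨r'', Q'', hh⟩ := ih1 hop.1 hl1 ⟨_, _, hs1⟩ hP
                (by intro r0 heq; cases heq; exact hsl rfl) (by rintro ⟨⟩)
              exact ⟨r'', _, SStep.parL hh (by rintro ⟨⟩)⟩
          | commRL hP hQ =>
              obtain ⟨r'', Q'', hh⟩ := ih1 hop.1 hl1 ⟨_, _, hs1⟩ hP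
                (by rintro _ ⟨⟩) (by rintro ⟨⟩)
              exact ⟨r'', _, SStep.parL hh (by rintro ⟨⟩)⟩
          | parTick h1 h2 => exact absurd rfl htick
      | parR hs2 _ =>
          cases hs with
          | parL h hne => exact ⟨r', _, SStep.parR hs2 (by rintro ⟨⟩)⟩
          | parR h hne =>
              obtain ⟨r'', Q'', hh⟩ := ih2 hop.2 hl2 ⟨_, _, hs2⟩ h hout htick
              exact ⟨r'', _, SStep.parR hh (by rintro ⟨⟩)⟩
          | commLR hP hQ =>
              obtain ⟨r'', Q'', hh⟩ := ih2 hop.2 hl2 ⟨_, _, hs2⟩ hQ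
                (by rintro _ ⟨⟩) (by rintro ⟨⟩)
              exact ⟨r'', _, SStep.parR hh (by rintro ⟨⟩)⟩
          | commRL hP hQ =>
              have hsr := sstep_inp_role hP
              have hsl : _ ≠ l := fun h => hl1 (h ▸ hsr)
              obtain ⟨r'', Q'', hh⟩ := ih2 hop.2 hl2 ⟨_, _, hs2⟩ hQ
                (by intro r0 heq; cases heq; exact hsl rfl) (by rintro ⟨⟩)
              exact ⟨r'', _, SStep.parR hh (by rintro ⟨⟩)⟩
          | parTick h1 h2 => exact absurd rfl htick

/-! #### The "no bad pending output" argument -/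

/-- A bad state: the contract at role `l` will never be able to receive `a`,
yet some other contract has an output `ā` directed to `l` enabled. -/
def BadSt (a : AName) (l : Role) (S : Sys) : Prop :=
  ∃ D Q, S = .par (.atom D l) Q ∧ a ∉ inames D ∧ EnOut Q a l ∧ AllOP Q ∧
    l ∉ rolesList Q

theorem badst_step {a : AName} {l : Role} {S S' : Sys} (hb : BadSt a l S)
    (hs : CompleteStep S S') : BadSt a l S' := by
  obtain ⟨D, Q, rfl, hn, hen, hop, hl⟩ := hb
  rcases hs with h | ⟨x, r, s, h⟩
  · cases h with
    | parL h hne =>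
        cases h with
        | atomTau h =>
            exact ⟨_, Q, rfl, fun hx => hn (ostep_inames h hx), hen, hop, hl⟩
    | parR h hne =>
        refine ⟨D, _, rfl, hn, ?_, allop_sstep hop h, (sstep_rolesList h) ▸ hl⟩
        exact enout_persist hop hl hen h (by rintro _ ⟨⟩) (by rintro ⟨⟩)
  · cases h with
    | parL h hne => cases h
    | parR h hne =>
        refine ⟨D, _, rfl, hn, ?_, allop_sstep hop h, (sstep_rolesList h) ▸ hl⟩
        exact enout_persist hop hl hen h (by rintro _ ⟨⟩) (by rintro ⟨⟩)
    | commLR hP hQ =>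
        cases hP with
        | atomOut ho =>
            refine ⟨_, _, rfl, fun hx => hn (ostep_inames ho hx), ?_,
              allop_sstep hop hQ, (sstep_rolesList hQ) ▸ hl⟩
            exact enout_persist hop hl hen hQ (by rintro _ ⟨⟩) (by rintro ⟨⟩)
    | commRL hP hQ =>
        cases hP with
        | atomInp hi =>
            have hxa : x ≠ a := fun h => hn (h ▸ ostep_inp_inames hi)
            refine ⟨_, _, rfl, fun hx => hn (ostep_inames hi hx), ?_,
              allop_sstep hop hQ, (sstep_rolesList hQ) ▸ hl⟩
            refine enout_persist hop hl hen hQ ?_ (by rintro ⟨⟩)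
            intro r0 heq; cases heq; exact hxa rfl

theorem badst_notick {a : AName} {l : Role} {S : Sys} (hb : BadSt a l S)
    (ht : CanTick S) : False := by
  obtain ⟨D, Q, rfl, hn, hen, hop, hl⟩ := hb
  obtain ⟨S', hS'⟩ := ht
  cases hS' with
  | parL _ hne => exact absurd rfl hne
  | parR _ hne => exact absurd rfl hne
  | parTick h1 h2 => exact enout_notick hop hen h2

theorem badst_reach {a : AName} {l : Role} {S S' : Sys} (hr : Reach S S')
    (hb : BadSt a l S) : BadSt a l S' := by
  induction hr with
  | refl _ => exact hb
  | step h _ ih => exact ih (badst_step hb h)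

theorem nobad {a : AName} {l : Role} {S : Sys} (hc : Correct S)
    (hb : BadSt a l S) : False := by
  obtain ⟨S'', hr, ht⟩ := hc S (Reach.refl S)
  exact badst_notick (badst_reach hr hb) ht

/-! #### A generic correctness-transfer lemma -/

theorem reach_inv {Inv : Sys → Prop}
    (hstep : ∀ S S', Inv S → CompleteStep S S' → Inv S') {S₀ S : Sys}
    (h0 : Inv S₀) (hr : Reach S₀ S) : Inv S := by
  induction hr with
  | refl _ => exact h0
  | step h _ ih => exact ih (hstep _ _ h0 h)

theorem transfer {R : Sys → Sys → Prop} {Good : Sys → Prop} {S₀ T₀ : Sys}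
    (hlift : ∀ S T T', R S T → Good S → CompleteStep T T' →
      ∃ S', CompleteStep S S' ∧ R S' T')
    (hmap : ∀ S S' T, R S T → Good S → CompleteStep S S' →
      ∃ T', CompleteStep T T' ∧ R S' T')
    (htick : ∀ S T, R S T → CanTick S → CanTick T)
    (hgood : ∀ S, Reach S₀ S → Good S)
    (hR : R S₀ T₀) (hc : Correct S₀) : Correct T₀ := by
  have lift_reach : ∀ T T', Reach T T' → ∀ S, R S T → Reach S₀ S →
      ∃ S', Reach S₀ S' ∧ R S' T' := by
    intro T T' hr
    induction hr with
    | refl _ => exact fun S hRS hr0 => ⟨S, hr0, hRS⟩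
    | step h _ ih =>
        intro S hRS hr0
        obtain ⟨S', hS', hR'⟩ := hlift S _ _ hRS (hgood S hr0) h
        exact ih S' hR' (hr0.trans (Reach.single hS'))
  have map_reach : ∀ S S', Reach S S' → ∀ T, R S T → Reach S₀ S →
      ∃ T', Reach T T' ∧ R S' T' := by
    intro S S' hr
    induction hr with
    | refl _ => exact fun T hRS _ => ⟨T, Reach.refl T, hRS⟩
    | step h _ ih =>
        intro T hRS hr0
        obtain ⟨T', hT', hR'⟩ := hmap _ _ _ hRS (hgood _ hr0) h
        obtain ⟨T'', hT'', hR''⟩ := ih T' hR' (hr0.trans (Reach.single h))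
        exact ⟨T'', (Reach.single hT').trans hT'', hR''⟩
  intro T' hT'
  obtain ⟨S', hS', hR'⟩ := lift_reach T₀ T' hT' S₀ hR (Reach.refl S₀)
  obtain ⟨S'', hS'', ht⟩ := hc S' hS'
  obtain ⟨T'', hT'', hR''⟩ := map_reach S' S'' hS'' T' hR' hS'
  exact ⟨T'', hT'', htick _ _ hR'' ht⟩

/-- Shape and invariants preserved by a complete step of `[E]_l ‖ Q`. -/
theorem cstep_shape {E : Orc} {l : Role} {Q S' : Sys}
    (hs : CompleteStep (.par (.atom E l) Q) S') :
    ∃ E' Q', S' = .par (.atom E' l) Q' ∧ inames E' ⊆ inames E ∧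
      rolesList Q' = rolesList Q ∧ (AllOP Q → AllOP Q') := by
  rcases hs with h | ⟨x, r, s, h⟩
  · cases h with
    | parL h hne =>
        cases h with
        | atomTau h => exact ⟨_, Q, rfl, ostep_inames h, rfl, id⟩
    | parR h hne =>
        exact ⟨E, _, rfl, Finset.Subset.refl _, sstep_rolesList h,
          fun hop => allop_sstep hop h⟩
  · cases h with
    | parL h hne => cases h
    | parR h hne =>
        exact ⟨E, _, rfl, Finset.Subset.refl _, sstep_rolesList h,
          fun hop => allop_sstep hop h⟩
    | commLR hP hQ =>
        cases hP with
        | atomOut ho =>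
            exact ⟨_, _, rfl, ostep_inames ho, sstep_rolesList hQ,
              fun hop => allop_sstep hop hQ⟩
    | commRL hP hQ =>
        cases hP with
        | atomInp hi =>
            exact ⟨_, _, rfl, ostep_inames hi, sstep_rolesList hQ,
              fun hop => allop_sstep hop hQ⟩

/-- Goodness predicate: no pending output toward `l` on a name in `M`. -/
def GoodM (M : Finset AName) (l : Role) (S : Sys) : Prop :=
  ∀ a ∈ M, ∀ D Q, S = .par (.atom D l) Q → ¬ EnOut Q a l

/-- Complete steps of the unrestricted system map to the input-restricted
system, provided the source state is good. -/
theorem rs_map {M : Finset AName} {l : Role} {D : Orc} {Q T' : Sys}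
    (hgood : GoodM M l (.par (.atom (restrict D M) l) Q))
    (hs : CompleteStep (.par (.atom D l) Q) T') :
    ∃ D' Q', T' = .par (.atom D' l) Q' ∧
      CompleteStep (.par (.atom (restrict D M) l) Q)
        (.par (.atom (restrict D' M) l) Q') := by
  rcases hs with h | ⟨x, r, s, h⟩
  · cases h with
    | parL h hne =>
        cases h with
        | atomTau h =>
            exact ⟨_, Q, rfl, Or.inl (SStep.parL (SStep.atomTau
              (restrict_fwd h (by rintro _ _ ⟨⟩))) (by rintro ⟨⟩))⟩
    | parR h hne =>
        exact ⟨D, _, rfl, Or.inl (SStep.parR h (by rintro ⟨⟩))⟩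
  · cases h with
    | parL h hne => cases h
    | parR h hne =>
        exact ⟨D, _, rfl, Or.inr ⟨x, r, s, SStep.parR h (by rintro ⟨⟩)⟩⟩
    | commLR hP hQ =>
        cases hP with
        | atomOut ho =>
            exact ⟨_, _, rfl, Or.inr ⟨x, l, s, SStep.commLR
              (SStep.atomOut (restrict_fwd ho (by rintro _ _ ⟨⟩))) hQ⟩⟩
    | commRL hP hQ =>
        cases hP with
        | atomInp hi =>
            by_cases hxM : x ∈ M
            · exact absurd ⟨r, _, hQ⟩ (hgood x hxM _ Q rfl)
            · refine ⟨_, _, rfl, Or.inr ⟨x, r, l, SStep.commRL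
                (SStep.atomInp (restrict_fwd hi ?_)) hQ⟩⟩
              intro b hb heq; cases heq; exact hxM hb

/-- Complete steps of the input-restricted system lift to the unrestricted
system. -/
theorem rs_lift {M : Finset AName} {l : Role} {D : Orc} {Q T' : Sys}
    (hs : CompleteStep (.par (.atom (restrict D M) l) Q) T') :
    ∃ D' Q', T' = .par (.atom (restrict D' M) l) Q' ∧
      CompleteStep (.par (.atom D l) Q) (.par (.atom D' l) Q') := by
  rcases hs with h | ⟨x, r, s, h⟩
  · cases h with
    | parL h hne =>
        cases h with
        | atomTau h =>
            obtain ⟨D', hD', rfl, _⟩ := restrict_bwd h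
            exact ⟨D', Q, rfl, Or.inl (SStep.parL (SStep.atomTau hD')
              (by rintro ⟨⟩))⟩
    | parR h hne =>
        exact ⟨D, _, rfl, Or.inl (SStep.parR h (by rintro ⟨⟩))⟩
  · cases h with
    | parL h hne => cases h
    | parR h hne =>
        exact ⟨D, _, rfl, Or.inr ⟨x, r, s, SStep.parR h (by rintro ⟨⟩)⟩⟩
    | commLR hP hQ =>
        cases hP with
        | atomOut ho =>
            obtain ⟨D', hD', rfl, _⟩ := restrict_bwd ho
            exact ⟨D', _, rfl, Or.inr ⟨x, l, s, SStep.commLR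
              (SStep.atomOut hD') hQ⟩⟩
    | commRL hP hQ =>
        cases hP with
        | atomInp hi =>
            obtain ⟨D', hD', rfl, _⟩ := restrict_bwd hi
            exact ⟨D', _, rfl, Or.inr ⟨x, r, l, SStep.commRL
              (SStep.atomInp hD') hQ⟩⟩

theorem rs_tick_lift {M : Finset AName} {l : Role} {D : Orc} {Q : Sys}
    (h : CanTick (.par (.atom (restrict D M) l) Q)) :
    CanTick (.par (.atom D l) Q) := by
  obtain ⟨S', hS'⟩ := h
  cases hS' with
  | parL _ hne => exact absurd rfl hne
  | parR _ hne => exact absurd rfl hne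
  | parTick h1 h2 =>
      cases h1 with
      | atomTick h =>
          obtain ⟨D', hD', _, _⟩ := restrict_bwd h
          exact ⟨_, SStep.parTick (SStep.atomTick hD') h2⟩

theorem rs_tick_map {M : Finset AName} {l : Role} {D : Orc} {Q : Sys}
    (h : CanTick (.par (.atom D l) Q)) :
    CanTick (.par (.atom (restrict D M) l) Q) := by
  obtain ⟨S', hS'⟩ := h
  cases hS' with
  | parL _ hne => exact absurd rfl hne
  | parR _ hne => exact absurd rfl hne
  | parTick h1 h2 =>
      cases h1 with
      | atomTick hD =>
          exact ⟨_, SStep.parTick (SStep.atomTick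
            (restrict_fwd hD (by rintro _ _ ⟨⟩))) h2⟩

theorem goodm_shape {M : Finset AName} {l : Role} {A B : Orc} {Q : Sys}
    (h : GoodM M l (.par (.atom A l) Q)) : GoodM M l (.par (.atom B l) Q) := by
  intro a ha D0 Q0 heq hen
  simp only [Sys.par.injEq, Sys.atom.injEq] at heq
  exact h a ha A Q rfl (heq.2 ▸ hen)

/-- Correctness of `[C₀\M]_l ‖ P` implies correctness of `[C₀]_l ‖ P`. -/
theorem correct_unrestrict {C₀ : Orc} {M : Finset AName} {l : Role} {P : Sys}
    (hop : AllOP P) (hl : l ∉ rolesList P)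
    (hc : Correct (.par (.atom (restrict C₀ M) l) P)) :
    Correct (.par (.atom C₀ l) P) := by
  have hinv : ∀ S, Reach (.par (.atom (restrict C₀ M) l) P) S →
      ∃ E Q, S = .par (.atom E l) Q ∧ inames E ⊆ inames (restrict C₀ M) ∧
        AllOP Q ∧ l ∉ rolesList Q := by
    intro S hr
    refine reach_inv (Inv := fun S => ∃ E Q, S = .par (.atom E l) Q ∧
        inames E ⊆ inames (restrict C₀ M) ∧ AllOP Q ∧ l ∉ rolesList Q)
      ?_ ⟨restrict C₀ M, P, rfl, Finset.Subset.refl _, hop, hl⟩ hr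
    rintro S S' ⟨E, Q, rfl, hiE, hopQ, hlQ⟩ hs
    obtain ⟨E', Q', rfl, hsub, hroles, hopf⟩ := cstep_shape hs
    exact ⟨E', Q', rfl, hsub.trans hiE, hopf hopQ, hroles ▸ hlQ⟩
  have hgood : ∀ S, Reach (.par (.atom (restrict C₀ M) l) P) S → GoodM M l S := by
    intro S hr a haM D Q hSeq hen
    obtain ⟨E, Q₂, rfl, hiE, hopQ, hlQ⟩ := hinv S hr
    simp only [Sys.par.injEq, Sys.atom.injEq] at hSeq
    obtain ⟨⟨rfl, -⟩, rfl⟩ := hSeq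
    exact nobad (correct_reach hc hr)
      ⟨E, Q₂, rfl, fun hx => inames_restrict haM C₀ (hiE hx), hen, hopQ, hlQ⟩
  refine transfer (R := fun S T => ∃ D Q,
      S = .par (.atom (restrict D M) l) Q ∧ T = .par (.atom D l) Q)
    (Good := GoodM M l) ?_ ?_ ?_ hgood ⟨C₀, P, rfl, rfl⟩ hc
  · rintro S T T' ⟨D, Q, rfl, rfl⟩ hgd hs
    obtain ⟨D', Q', rfl, hstep⟩ := rs_map hgd hs
    exact ⟨_, hstep, D', Q', rfl, rfl⟩
  · rintro S S' T ⟨D, Q, rfl, rfl⟩ _ hs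
    obtain ⟨D', Q', rfl, hstep⟩ := rs_lift hs
    exact ⟨_, hstep, D', Q', rfl, rfl⟩
  · rintro S T ⟨D, Q, rfl, rfl⟩ ht
    exact rs_tick_lift ht

/-- If no reachable state of `[C₀]_l ‖ P` has a pending output toward `l` on a
name in `M`, then its correctness implies correctness of `[C₀\M]_l ‖ P`. -/
theorem correct_restrict {C₀ : Orc} {M : Finset AName} {l : Role} {P : Sys}
    (hgood : ∀ S, Reach (.par (.atom C₀ l) P) S → GoodM M l S)
    (hc : Correct (.par (.atom C₀ l) P)) :
    Correct (.par (.atom (restrict C₀ M) l) P) := by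
  refine transfer (R := fun S T => ∃ D Q,
      S = .par (.atom D l) Q ∧ T = .par (.atom (restrict D M) l) Q)
    (Good := GoodM M l) ?_ ?_ ?_ hgood ⟨C₀, P, rfl, rfl⟩ hc
  · rintro S T T' ⟨D, Q, rfl, rfl⟩ _ hs
    obtain ⟨D', Q', rfl, hstep⟩ := rs_lift hs
    exact ⟨_, hstep, D', Q', rfl, rfl⟩
  · rintro S S' T ⟨D, Q, rfl, rfl⟩ hgd hs
    obtain ⟨D', Q', rfl, hstep⟩ := rs_map (goodm_shape hgd) hs
    exact ⟨_, hstep, D', Q', rfl, rfl⟩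
  · rintro S T ⟨D, Q, rfl, rfl⟩ ht
    exact rs_tick_map ht

/-! #### Restricting outputs toward `l` in each component of a system -/

/-- Apply `orestrict · M l` to every located contract of a system. -/
def orestQ (M : Finset AName) (l : Role) : Sys → Sys
  | .atom E r => .atom (orestrict E M l) r
  | .par P Q => .par (orestQ M l P) (orestQ M l Q)

theorem rolesList_orestQ (M : Finset AName) (l : Role) (Q : Sys) :
    rolesList (orestQ M l Q) = rolesList Q := by
  induction Q with
  | atom E r => rfl
  | par P Q ih1 ih2 => simp [orestQ, rolesList, ih1, ih2]

theorem allop_orestQ {M : Finset AName} {l : Role} {Q : Sys} (h : AllOP Q) :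
    AllOP (orestQ M l Q) := by
  induction Q with
  | atom E r => exact op_orestrict h
  | par P Q ih1 ih2 => exact ⟨ih1 h.1, ih2 h.2⟩

theorem noselfout_orestQ {M : Finset AName} {l : Role} {Q : Sys}
    (h : NoSelfOut Q) : NoSelfOut (orestQ M l Q) := by
  induction Q with
  | atom E r => exact fun hx => h (oroles_orestrict E M l hx)
  | par P Q ih1 ih2 => exact ⟨ih1 h.1, ih2 h.2⟩

theorem os_map {M : Finset AName} {l : Role} {Q : Sys} {μ : SLabel} {Q' : Sys}
    (h : SStep Q μ Q') :
    l ∉ rolesList Q → (∀ b ∈ M, ∀ r, μ ≠ .out b r l) →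
    SStep (orestQ M l Q) μ (orestQ M l Q') := by
  induction h with
  | atomTau h =>
      exact fun _ _ => SStep.atomTau (orestrict_fwd h (by rintro _ _ ⟨⟩))
  | atomInp h =>
      exact fun _ _ => SStep.atomInp (orestrict_fwd h (by rintro _ _ ⟨⟩))
  | @atomOut C a s C' r h =>
      intro hl hμ
      refine SStep.atomOut (orestrict_fwd h ?_)
      intro b hb heq; cases heq; exact hμ _ hb r rfl
  | atomTick h =>
      exact fun _ _ => SStep.atomTick (orestrict_fwd h (by rintro _ _ ⟨⟩))
  | parL h hne ih =>
      intro hl hμ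
      exact SStep.parL (ih (fun hm => hl (by simp [rolesList, hm])) hμ) hne
  | parR h hne ih =>
      intro hl hμ
      exact SStep.parR (ih (fun hm => hl (by simp [rolesList, hm])) hμ) hne
  | @commLR P a r s P' Q Q' hP hQ ihP ihQ =>
      intro hl hμ
      have hs : s ∈ rolesList Q := sstep_inp_role hQ
      have hsl : s ≠ l := fun h => hl (by simp [rolesList, h ▸ hs])
      refine SStep.commLR
        (ihP (fun hm => hl (by simp [rolesList, hm])) ?_)
        (ihQ (fun hm => hl (by simp [rolesList, hm])) (by rintro _ _ _ ⟨⟩))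
      intro b hb r' heq; cases heq; exact hsl rfl
  | @commRL P a s P' Q r Q' hP hQ ihP ihQ =>
      intro hl hμ
      have hs : s ∈ rolesList P := sstep_inp_role hP
      have hsl : s ≠ l := fun h => hl (by simp [rolesList, h ▸ hs])
      refine SStep.commRL
        (ihP (fun hm => hl (by simp [rolesList, hm])) (by rintro _ _ _ ⟨⟩))
        (ihQ (fun hm => hl (by simp [rolesList, hm])) ?_)
      intro b hb r' heq; cases heq; exact hsl rfl
  | parTick h1 h2 ih1 ih2 =>
      intro hl hμ
      exact SStep.parTick
        (ih1 (fun hm => hl (by simp [rolesList, hm])) (by rintro _ _ _ ⟨⟩))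
        (ih2 (fun hm => hl (by simp [rolesList, hm])) (by rintro _ _ _ ⟨⟩))

theorem os_lift {M : Finset AName} {l : Role} {Q : Sys} {μ : SLabel} {T : Sys}
    (h : SStep (orestQ M l Q) μ T) :
    ∃ Q', T = orestQ M l Q' ∧ SStep Q μ Q' ∧ ∀ b ∈ M, ∀ r, μ ≠ .out b r l := by
  induction Q generalizing μ T with
  | atom E r =>
      cases h with
      | atomTau h =>
          obtain ⟨E', hE, rfl, _⟩ := orestrict_bwd h
          exact ⟨.atom E' r, rfl, SStep.atomTau hE, by rintro _ _ _ ⟨⟩⟩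
      | atomInp h =>
          obtain ⟨E', hE, rfl, _⟩ := orestrict_bwd h
          exact ⟨.atom E' r, rfl, SStep.atomInp hE, by rintro _ _ _ ⟨⟩⟩
      | atomOut h =>
          obtain ⟨E', hE, rfl, hcond⟩ := orestrict_bwd h
          refine ⟨.atom E' r, rfl, SStep.atomOut hE, ?_⟩
          intro b hb r' heq; cases heq; exact hcond _ hb rfl
      | atomTick h =>
          obtain ⟨E', hE, rfl, _⟩ := orestrict_bwd h
          exact ⟨.atom E' r, rfl, SStep.atomTick hE, by rintro _ _ _ ⟨⟩⟩
  | par P Q ih1 ih2 =>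
      cases h with
      | parL h hne =>
          obtain ⟨P', rfl, hs, hcond⟩ := ih1 h
          exact ⟨.par P' Q, rfl, SStep.parL hs hne, hcond⟩
      | parR h hne =>
          obtain ⟨Q', rfl, hs, hcond⟩ := ih2 h
          exact ⟨.par P Q', rfl, SStep.parR hs hne, hcond⟩
      | commLR hP hQ =>
          obtain ⟨P', rfl, hs1, _⟩ := ih1 hP
          obtain ⟨Q', rfl, hs2, _⟩ := ih2 hQ
          exact ⟨.par P' Q', rfl, SStep.commLR hs1 hs2, by rintro _ _ _ ⟨⟩⟩
      | commRL hP hQ =>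
          obtain ⟨P', rfl, hs1, _⟩ := ih1 hP
          obtain ⟨Q', rfl, hs2, _⟩ := ih2 hQ
          exact ⟨.par P' Q', rfl, SStep.commRL hs1 hs2, by rintro _ _ _ ⟨⟩⟩
      | parTick h1 h2 =>
          obtain ⟨P', rfl, hs1, _⟩ := ih1 h1
          obtain ⟨Q', rfl, hs2, _⟩ := ih2 h2
          exact ⟨.par P' Q', rfl, SStep.parTick hs1 hs2, by rintro _ _ _ ⟨⟩⟩

theorem os_cmap {M : Finset AName} {l : Role} {D : Orc} {Q S' : Sys}
    (hgd : GoodM M l (.par (.atom D l) Q)) (hl : l ∉ rolesList Q)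
    (hs : CompleteStep (.par (.atom D l) Q) S') :
    ∃ D' Q', S' = .par (.atom D' l) Q' ∧ rolesList Q' = rolesList Q ∧
      (AllOP Q → AllOP Q') ∧
      CompleteStep (.par (.atom D l) (orestQ M l Q))
        (.par (.atom D' l) (orestQ M l Q')) := by
  rcases hs with h | ⟨x, r, s, h⟩
  · cases h with
    | parL h hne =>
        cases h with
        | atomTau h =>
            exact ⟨_, Q, rfl, rfl, id,
              Or.inl (SStep.parL (SStep.atomTau h) (by rintro ⟨⟩))⟩
    | parR h hne =>
        exact ⟨D, _, rfl, sstep_rolesList h, fun hq => allop_sstep hq h,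
          Or.inl (SStep.parR (os_map h hl (by rintro _ _ _ ⟨⟩)) (by rintro ⟨⟩))⟩
  · cases h with
    | parL h hne => cases h
    | parR h hne =>
        exact ⟨D, _, rfl, sstep_rolesList h, fun hq => allop_sstep hq h,
          Or.inr ⟨x, r, s, SStep.parR (os_map h hl (by rintro _ _ _ ⟨⟩))
            (by rintro ⟨⟩)⟩⟩
    | commLR hP hQ =>
        cases hP with
        | atomOut ho =>
            exact ⟨_, _, rfl, sstep_rolesList hQ, fun hq => allop_sstep hq hQ,
              Or.inr ⟨x, l, s, SStep.commLR (SStep.atomOut ho)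
                (os_map hQ hl (by rintro _ _ _ ⟨⟩))⟩⟩
    | commRL hP hQ =>
        cases hP with
        | atomInp hi =>
            by_cases hxM : x ∈ M
            · exact absurd ⟨r, _, hQ⟩ (hgd x hxM D Q rfl)
            · refine ⟨_, _, rfl, sstep_rolesList hQ, fun hq => allop_sstep hq hQ,
                Or.inr ⟨x, r, l, SStep.commRL (SStep.atomInp hi)
                  (os_map hQ hl ?_)⟩⟩
              intro b hb r' heq; cases heq; exact hxM hb

theorem os_clift {M : Finset AName} {l : Role} {D : Orc} {Q T' : Sys}
    (hs : CompleteStep (.par (.atom D l) (orestQ M l Q)) T') :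
    ∃ D' Q', T' = .par (.atom D' l) (orestQ M l Q') ∧
      rolesList Q' = rolesList Q ∧
      CompleteStep (.par (.atom D l) Q) (.par (.atom D' l) Q') ∧
      (Q' = Q ∨ ∃ ν, SStep Q ν Q' ∧ (∀ b ∈ M, ∀ r, ν ≠ .out b r l) ∧
        ν ≠ .tick) := by
  rcases hs with h | ⟨x, r, s, h⟩
  · cases h with
    | parL h hne =>
        cases h with
        | atomTau h =>
            exact ⟨_, Q, rfl, rfl,
              Or.inl (SStep.parL (SStep.atomTau h) (by rintro ⟨⟩)), Or.inl rfl⟩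
    | parR h hne =>
        obtain ⟨Q', rfl, hstep, hcond⟩ := os_lift h
        exact ⟨D, Q', rfl, sstep_rolesList hstep,
          Or.inl (SStep.parR hstep (by rintro ⟨⟩)),
          Or.inr ⟨_, hstep, hcond, by rintro ⟨⟩⟩⟩
  · cases h with
    | parL h hne => cases h
    | parR h hne =>
        obtain ⟨Q', rfl, hstep, hcond⟩ := os_lift h
        exact ⟨D, Q', rfl, sstep_rolesList hstep,
          Or.inr ⟨x, r, s, SStep.parR hstep (by rintro ⟨⟩)⟩,
          Or.inr ⟨_, hstep, hcond, by rintro ⟨⟩⟩⟩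
    | commLR hP hQ =>
        cases hP with
        | atomOut ho =>
            obtain ⟨Q', rfl, hstep, hcond⟩ := os_lift hQ
            exact ⟨_, Q', rfl, sstep_rolesList hstep,
              Or.inr ⟨x, l, s, SStep.commLR (SStep.atomOut ho) hstep⟩,
              Or.inr ⟨_, hstep, hcond, by rintro ⟨⟩⟩⟩
    | commRL hP hQ =>
        cases hP with
        | atomInp hi =>
            obtain ⟨Q', rfl, hstep, hcond⟩ := os_lift hQ
            exact ⟨_, Q', rfl, sstep_rolesList hstep,
              Or.inr ⟨x, r, l, SStep.commRL (SStep.atomInp hi) hstep⟩,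
              Or.inr ⟨_, hstep, hcond, by rintro ⟨⟩⟩⟩

theorem os_tick_map {M : Finset AName} {l : Role} {D : Orc} {Q : Sys}
    (hl : l ∉ rolesList Q) (h : CanTick (.par (.atom D l) Q)) :
    CanTick (.par (.atom D l) (orestQ M l Q)) := by
  obtain ⟨S', hS'⟩ := h
  cases hS' with
  | parL _ hne => exact absurd rfl hne
  | parR _ hne => exact absurd rfl hne
  | parTick h1 h2 =>
      exact ⟨_, SStep.parTick h1 (os_map h2 hl (by rintro _ _ _ ⟨⟩))⟩

theorem os_tick_lift {M : Finset AName} {l : Role} {D : Orc} {Q : Sys}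
    (h : CanTick (.par (.atom D l) (orestQ M l Q))) :
    CanTick (.par (.atom D l) Q) := by
  obtain ⟨S', hS'⟩ := h
  cases hS' with
  | parL _ hne => exact absurd rfl hne
  | parR _ hne => exact absurd rfl hne
  | parTick h1 h2 =>
      obtain ⟨Q', rfl, hstep, _⟩ := os_lift h2
      exact ⟨_, SStep.parTick h1 hstep⟩

/-- At every state reachable from a correct `[E₀]_l ‖ P`, no output toward `l`
on a name that `E₀` can never receive is pending. -/
theorem allgood_of_inames {E₀ : Orc} {M : Finset AName} {l : Role} {P : Sys}
    (hM : ∀ a ∈ M, a ∉ inames E₀) (hop : AllOP P) (hl : l ∉ rolesList P)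
    (hc : Correct (.par (.atom E₀ l) P)) :
    ∀ S, Reach (.par (.atom E₀ l) P) S → GoodM M l S := by
  have hinv : ∀ S, Reach (.par (.atom E₀ l) P) S →
      ∃ E Q, S = .par (.atom E l) Q ∧ inames E ⊆ inames E₀ ∧
        AllOP Q ∧ l ∉ rolesList Q := by
    intro S hr
    refine reach_inv (Inv := fun S => ∃ E Q, S = .par (.atom E l) Q ∧
        inames E ⊆ inames E₀ ∧ AllOP Q ∧ l ∉ rolesList Q)
      ?_ ⟨E₀, P, rfl, Finset.Subset.refl _, hop, hl⟩ hr
    rintro S S' ⟨E, Q, rfl, hiE, hopQ, hlQ⟩ hs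
    obtain ⟨E', Q', rfl, hsub, hroles, hopf⟩ := cstep_shape hs
    exact ⟨E', Q', rfl, hsub.trans hiE, hopf hopQ, hroles ▸ hlQ⟩
  intro S hr a haM D Q hSeq hen
  obtain ⟨E, Q₂, rfl, hiE, hopQ, hlQ⟩ := hinv S hr
  simp only [Sys.par.injEq, Sys.atom.injEq] at hSeq
  obtain ⟨⟨rfl, -⟩, rfl⟩ := hSeq
  exact nobad (correct_reach hc hr)
    ⟨E, Q₂, rfl, fun hx => hM a haM (hiE hx), hen, hopQ, hlQ⟩

/-- Correctness is preserved when removing, from every contract of `P`, the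
outputs toward `l` on names that `C₀` can never receive. -/
theorem correct_hat {C₀ : Orc} {M : Finset AName} {l : Role} {P : Sys}
    (hop : AllOP P) (hl : l ∉ rolesList P) (hM : ∀ b ∈ M, b ∉ inames C₀)
    (hc : Correct (.par (.atom C₀ l) P)) :
    Correct (.par (.atom C₀ l) (orestQ M l P)) := by
  refine transfer (R := fun S T => ∃ D Q,
      S = .par (.atom D l) Q ∧ T = .par (.atom D l) (orestQ M l Q) ∧
      l ∉ rolesList Q)
    (Good := GoodM M l) ?_ ?_ ?_ (allgood_of_inames hM hop hl hc)
    ⟨C₀, P, rfl, rfl, hl⟩ hc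
  · rintro S T T' ⟨D, Q, rfl, rfl, hlQ⟩ _ hs
    obtain ⟨D', Q', rfl, hroles, hstep, -⟩ := os_clift hs
    exact ⟨_, hstep, D', Q', rfl, rfl, hroles ▸ hlQ⟩
  · rintro S S' T ⟨D, Q, rfl, rfl, hlQ⟩ hgd hs
    obtain ⟨D', Q', rfl, hroles, -, hstep⟩ := os_cmap hgd hlQ hs
    exact ⟨_, hstep, D', Q', rfl, rfl, hroles ▸ hlQ⟩
  · rintro S T ⟨D, Q, rfl, rfl, hlQ⟩ ht
    exact os_tick_map hlQ ht

/-- Invariant: some contract of the original `Q` has a pending output `ā_l`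
whose restricted version is deadlocked. -/
def HInv (M : Finset AName) (a : AName) (l : Role) (T : Sys) : Prop :=
  ∃ D Q, T = .par (.atom D l) (orestQ M l Q) ∧ EnOut Q a l ∧ AllOP Q ∧
    l ∉ rolesList Q

theorem hinv_step {M : Finset AName} {a : AName} {l : Role} {T T' : Sys}
    (ha : a ∈ M) (h : HInv M a l T) (hs : CompleteStep T T') :
    HInv M a l T' := by
  obtain ⟨D, Q, rfl, hen, hop, hl⟩ := h
  obtain ⟨D', Q', rfl, hroles, -, hdisj⟩ := os_clift hs
  rcases hdisj with heq | ⟨ν, hν, hcond, htick⟩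
  · subst heq; exact ⟨D', Q', rfl, hen, hop, hl⟩
  · exact ⟨D', Q', rfl,
      enout_persist hop hl hen hν (fun r => hcond a ha r) htick,
      allop_sstep hop hν, hroles ▸ hl⟩

theorem hinv_correct {M : Finset AName} {a : AName} {l : Role} {T : Sys}
    (ha : a ∈ M) (hc : Correct T) (h : HInv M a l T) : False := by
  obtain ⟨T'', hr, ht⟩ := hc T (Reach.refl T)
  have h'' : HInv M a l T'' :=
    reach_inv (Inv := HInv M a l) (fun _ _ hi hs => hinv_step ha hi hs) h hr
  obtain ⟨D, Q, rfl, hen, hop, hl⟩ := h''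
  obtain ⟨X, hX⟩ := ht
  cases hX with
  | parL _ hne => exact absurd rfl hne
  | parR _ hne => exact absurd rfl hne
  | parTick h1 h2 =>
      obtain ⟨Q', rfl, hstep, _⟩ := os_lift h2
      exact enout_notick hop hen hstep

/-- Reachability through complete steps whose source states satisfy `Good`. -/
inductive ReachAvoid (Good : Sys → Prop) : Sys → Sys → Prop
  | refl (P) : ReachAvoid Good P P
  | step : Good P → CompleteStep P P' → ReachAvoid Good P' P'' →
      ReachAvoid Good P P''

theorem first_bad {Good : Sys → Prop} {S₀ S : Sys} (hr : Reach S₀ S)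
    (hb : ¬ Good S) : ∃ S₁, ReachAvoid Good S₀ S₁ ∧ ¬ Good S₁ := by
  induction hr with
  | refl P => exact ⟨P, ReachAvoid.refl P, hb⟩
  | @step P P' P'' h hr ih =>
      by_cases hg : Good P
      · obtain ⟨S₁, hra, hb1⟩ := ih hb
        exact ⟨S₁, ReachAvoid.step hg h hra, hb1⟩
      · exact ⟨P, ReachAvoid.refl P, hg⟩

theorem mapg_reach {M : Finset AName} {l : Role} {S₀ S₁ : Sys}
    (hr : ReachAvoid (GoodM M l) S₀ S₁) :
    ∀ D Q, S₀ = .par (.atom D l) Q → l ∉ rolesList Q → AllOP Q →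
    ∃ D₁ Q₁, S₁ = .par (.atom D₁ l) Q₁ ∧ l ∉ rolesList Q₁ ∧ AllOP Q₁ ∧
      Reach (.par (.atom D l) (orestQ M l Q))
        (.par (.atom D₁ l) (orestQ M l Q₁)) := by
  induction hr with
  | refl P =>
      rintro D Q rfl hl hop
      exact ⟨D, Q, rfl, hl, hop, Reach.refl _⟩
  | step hg h hr ih =>
      rintro D Q rfl hl hop
      obtain ⟨D', Q', rfl, hroles, hopf, hstep⟩ := os_cmap hg hl h
      obtain ⟨D₁, Q₁, rfl, hl1, hop1, hre⟩ :=
        ih D' Q' rfl (hroles ▸ hl) (hopf hop)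
      exact ⟨D₁, Q₁, rfl, hl1, hop1, (Reach.single hstep).trans hre⟩

/-- The key cross-system property: if `C' ⪯ C` and `[C]_l ‖ P` is correct,
then no state reachable from `[C']_l ‖ P` has a pending output toward `l` on a
name in `I(C') − I(C)`. -/
theorem nobadcross {C C' : Orc} {l : Role} {P : Sys}
    (hsub : Subcontract C' C) (hl' : l ∉ oroles C ∪ oroles C')
    (hopP : AllOP P) (hwf : WFSys P) (hlP : l ∉ rolesList P)
    (hCP : Correct (.par (.atom C l) P)) :
    ∀ S, Reach (.par (.atom C' l) P) S →
      GoodM (inames C' \ inames C) l S := by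
  set M := inames C' \ inames C with hMdef
  intro S hr
  by_contra hbad
  obtain ⟨S₁, hra, hb1⟩ := first_bad hr hbad
  simp only [GoodM] at hb1
  push_neg at hb1
  obtain ⟨a, haM, D₁x, Q₁x, hS₁, hen⟩ := hb1
  obtain ⟨D₁, Q₁, rfl, hl1, hop1, hre⟩ := mapg_reach hra C' P rfl hlP hopP
  simp only [Sys.par.injEq, Sys.atom.injEq] at hS₁
  obtain ⟨⟨rfl, -⟩, rfl⟩ := hS₁
  have hMC : ∀ b ∈ M, b ∉ inames C := fun b hb => (Finset.mem_sdiff.mp hb).2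
  have hCPhat : Correct (.par (.atom C l) (orestQ M l P)) :=
    correct_hat hopP hlP hMC hCP
  have hC'Phat : Correct (.par (.atom C' l) (orestQ M l P)) :=
    hsub l hl' (orestQ M l P) (allop_orestQ hopP)
      ⟨(rolesList_orestQ M l P) ▸ hwf.1, noselfout_orestQ hwf.2⟩
      ((rolesList_orestQ M l P) ▸ hlP) hCPhat
  exact hinv_correct haM (correct_reach hC'Phat hre)
    ⟨D₁, Q₁, rfl, hen, hop1, hl1⟩

end Aux

/-- For all output persistent contracts `C` and `C'`:
`C' \\ (I(C') − I(C)) ⪯ C` if and only if `C' ⪯ C`. -/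
theorem restrict_subcontract_iff (C C' : Orc)
    (hC : OutputPersistent C) (hC' : OutputPersistent C') :
    Subcontract (restrict C' (inames C' \ inames C)) C ↔ Subcontract C' C := by
  constructor
  · intro hres l hl P hopP hwf hlP hCP
    have hl2 : l ∉ oroles C ∪ oroles (restrict C' (inames C' \ inames C)) := by
      rwa [oroles_restrict]
    exact correct_unrestrict hopP hlP (hres l hl2 P hopP hwf hlP hCP)
  · intro hsub l hl P hopP hwf hlP hCP
    have hl2 : l ∉ oroles C ∪ oroles C' := by
      rwa [oroles_restrict] at hl
    exact correct_restrict (nobadcross hsub hl2 hopP hwf hlP hCP)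
      (hsub l hl2 P hopP hwf hlP hCP)
end

section
/- For all output persistent contracts C and C': if NF(C' \\ (I(C') − I(C))) ⪯_test NF(C), where ⪯_test is the should-testing (fair testing) preorder of Rensink–Vogler and NF gives the normal form of a contract as a system of recursive equations over its LTS, then C' ⪯ C. -/
section ShouldSound

variable {M : Finset AName} {l : Role}

/-! #### Restriction lemmas -/

lemma ostep_restrict_inv : ∀ {D : Orc} {μ E}, OStep (restrict D M) μ E →
    ∃ D', OStep D μ D' ∧ E = restrict D' M ∧ ∀ a ∈ M, μ ≠ .inp a := by
  intro D
  induction D with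
  | zero => intro μ E h; cases h
  | one => intro μ E h; cases h; exact ⟨.zero, OStep.one, rfl, by intro a _ hc; cases hc⟩
  | tau => intro μ E h; cases h; exact ⟨.one, OStep.tau, rfl, by intro a _ hc; cases hc⟩
  | inp a =>
    intro μ E h
    by_cases haM : a ∈ M
    · rw [show restrict (.inp a) M = .zero by simp [restrict, haM]] at h; cases h
    · rw [show restrict (.inp a) M = .inp a by simp [restrict, haM]] at h
      cases h; exact ⟨.one, OStep.inp, rfl, by intro b hb hc; cases hc; exact haM hb⟩
  | out a r => intro μ E h; cases h; exact ⟨.one, OStep.out, rfl, by intro b _ hc; cases hc⟩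
  | seq A B ihA ihB =>
    intro μ E h
    cases h with
    | seqL h1 hne =>
      obtain ⟨A', hA', rfl, hin⟩ := ihA h1
      exact ⟨.seq A' B, OStep.seqL hA' hne, rfl, hin⟩
    | seqTick h1 h2 =>
      obtain ⟨A', hA', -, -⟩ := ihA h1
      obtain ⟨B', hB', rfl, hin⟩ := ihB h2
      exact ⟨B', OStep.seqTick hA' hB', rfl, hin⟩
  | choice A B ihA ihB =>
    intro μ E h
    cases h with
    | choiceL h1 => obtain ⟨A', hA', rfl, hin⟩ := ihA h1; exact ⟨A', OStep.choiceL hA', rfl, hin⟩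
    | choiceR h1 => obtain ⟨B', hB', rfl, hin⟩ := ihB h1; exact ⟨B', OStep.choiceR hB', rfl, hin⟩
  | par A B ihA ihB =>
    intro μ E h
    cases h with
    | parL h1 hne =>
      obtain ⟨A', hA', rfl, hin⟩ := ihA h1
      exact ⟨.par A' B, OStep.parL hA' hne, rfl, hin⟩
    | parR h1 hne =>
      obtain ⟨B', hB', rfl, hin⟩ := ihB h1
      exact ⟨.par A B', OStep.parR hB' hne, rfl, hin⟩
    | parTick h1 h2 =>
      obtain ⟨A', hA', rfl, -⟩ := ihA h1
      obtain ⟨B', hB', rfl, -⟩ := ihB h2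
      exact ⟨.par A' B', OStep.parTick hA' hB', rfl, by intro a _ hc; cases hc⟩
  | star A ihA =>
    intro μ E h
    cases h with
    | starTick => exact ⟨.zero, OStep.starTick, rfl, by intro a _ hc; cases hc⟩
    | starStep h1 hne =>
      obtain ⟨A', hA', rfl, hin⟩ := ihA h1
      exact ⟨.seq A' (.star A), OStep.starStep hA' hne, rfl, hin⟩

lemma ostep_restrict : ∀ {D μ D'}, OStep D μ D' → (∀ a ∈ M, μ ≠ .inp a) →
    OStep (restrict D M) μ (restrict D' M) := by
  intro D μ D' h
  induction h with
  | one => intro _; exact OStep.one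
  | tau => intro _; exact OStep.tau
  | inp =>
    intro hin
    rename_i a
    have haM : a ∉ M := fun hm => hin a hm rfl
    rw [show restrict (.inp a) M = .inp a by simp [restrict, haM]]
    exact OStep.inp
  | out => intro _; exact OStep.out
  | choiceL h1 ih => intro hin; exact OStep.choiceL (ih hin)
  | choiceR h1 ih => intro hin; exact OStep.choiceR (ih hin)
  | seqL h1 hne ih => intro hin; exact OStep.seqL (ih hin) hne
  | seqTick h1 h2 ih1 ih2 =>
    intro hin
    exact OStep.seqTick (ih1 (by intro a _ hc; cases hc)) (ih2 hin)
  | parL h1 hne ih => intro hin; exact OStep.parL (ih hin) hne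
  | parR h1 hne ih => intro hin; exact OStep.parR (ih hin) hne
  | parTick h1 h2 ih1 ih2 =>
    intro _
    exact OStep.parTick (ih1 (by intro a _ hc; cases hc)) (ih2 (by intro a _ hc; cases hc))
  | starTick => intro _; exact OStep.starTick
  | starStep h1 hne ih => intro hin; exact OStep.starStep (ih hin) hne

lemma outputPersistent_ostep {C C₁ : Orc} {μ} (h : OutputPersistent C) (hs : OStep C μ C₁) :
    OutputPersistent C₁ := fun D hr => h D (OReach.step hs hr)

lemma oreach_restrict : ∀ {Z Y : Orc}, OReach Z Y → ∀ X, Z = restrict X M →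
    ∃ X', OReach X X' ∧ Y = restrict X' M := by
  intro Z Y h
  induction h with
  | refl C => intro X hX; exact ⟨X, OReach.refl X, hX⟩
  | step hs hr ih =>
    intro X hX; subst hX
    obtain ⟨X₁, hX₁, rfl, -⟩ := ostep_restrict_inv hs
    obtain ⟨X', hX', rfl⟩ := ih X₁ rfl
    exact ⟨X', OReach.step hX₁ hX', rfl⟩

lemma restrict_OP {X : Orc} (h : OutputPersistent X) : OutputPersistent (restrict X M) := by
  intro Y hr a r hout
  obtain ⟨X', hX', rfl⟩ := oreach_restrict hr X rfl
  obtain ⟨D, hD⟩ := hout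
  obtain ⟨D₀, hD₀, rfl, -⟩ := ostep_restrict_inv hD
  obtain ⟨h1, h2⟩ := h X' hX' a r ⟨D₀, hD₀⟩
  refine ⟨?_, ?_⟩
  · rintro ⟨E, hE⟩
    obtain ⟨E₀, hE₀, -, -⟩ := ostep_restrict_inv hE
    exact h1 ⟨E₀, hE₀⟩
  · intro μ Z hZ hne
    obtain ⟨X'', hX'', rfl, -⟩ := ostep_restrict_inv hZ
    obtain ⟨W, hW⟩ := h2 μ X'' hX'' hne
    exact ⟨restrict W M, ostep_restrict hW (by intro b _ hc; cases hc)⟩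

/-! #### System-level invariants -/

/-- Every contract located at role `l` is of the form `restrict X M`. -/
def AtomsRestr (l : Role) (M : Finset AName) : Sys → Prop
  | .atom E r => r = l → ∃ X, E = restrict X M
  | .par P Q => AtomsRestr l M P ∧ AtomsRestr l M Q

/-- Some component has a pending output `ā` directed to role `l`. -/
def PendOut (a : AName) (l : Role) : Sys → Prop
  | .atom E _ => ∃ E', OStep E (.out a l) E'
  | .par P Q => PendOut a l P ∨ PendOut a l Q

lemma allOP_sstep : ∀ {S μ S'}, SStep S μ S' → AllOP S → AllOP S' := by
  intro S
  induction S with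
  | atom C r =>
    intro μ S' h hop
    cases h with
    | atomTau h1 => exact outputPersistent_ostep hop h1
    | atomInp h1 => exact outputPersistent_ostep hop h1
    | atomOut h1 => exact outputPersistent_ostep hop h1
    | atomTick h1 => exact outputPersistent_ostep hop h1
  | par P Q ihP ihQ =>
    intro μ S' h hop
    obtain ⟨h1, h2⟩ := hop
    cases h with
    | parL h3 _ => exact ⟨ihP h3 h1, h2⟩
    | parR h3 _ => exact ⟨h1, ihQ h3 h2⟩
    | commLR h3 h4 => exact ⟨ihP h3 h1, ihQ h4 h2⟩
    | commRL h3 h4 => exact ⟨ihP h3 h1, ihQ h4 h2⟩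
    | parTick h3 h4 => exact ⟨ihP h3 h1, ihQ h4 h2⟩

lemma atomsRestr_sstep : ∀ {S μ S'}, SStep S μ S' → AtomsRestr l M S → AtomsRestr l M S' := by
  intro S
  induction S with
  | atom C r =>
    intro μ S' h hg
    have key : ∀ {μ' C'}, OStep C μ' C' → (r = l → ∃ X, C' = restrict X M) := by
      intro μ' C' h1 hrl
      obtain ⟨X, rfl⟩ := hg hrl
      obtain ⟨X₁, -, rfl, -⟩ := ostep_restrict_inv h1
      exact ⟨X₁, rfl⟩
    cases h with
    | atomTau h1 => exact key h1
    | atomInp h1 => exact key h1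
    | atomOut h1 => exact key h1
    | atomTick h1 => exact key h1
  | par P Q ihP ihQ =>
    intro μ S' h hg
    obtain ⟨h1, h2⟩ := hg
    cases h with
    | parL h3 _ => exact ⟨ihP h3 h1, h2⟩
    | parR h3 _ => exact ⟨h1, ihQ h3 h2⟩
    | commLR h3 h4 => exact ⟨ihP h3 h1, ihQ h4 h2⟩
    | commRL h3 h4 => exact ⟨ihP h3 h1, ihQ h4 h2⟩
    | parTick h3 h4 => exact ⟨ihP h3 h1, ihQ h4 h2⟩

lemma atomsRestr_of_not_mem : ∀ {Q : Sys}, l ∉ rolesList Q → AtomsRestr l M Q := by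
  intro Q
  induction Q with
  | atom C r =>
    intro h hrl
    exact absurd (by simp [rolesList, hrl]) h
  | par P Q ihP ihQ =>
    intro h
    simp only [rolesList, List.mem_append] at h
    push_neg at h
    exact ⟨ihP h.1, ihQ h.2⟩

lemma sstep_inp_not_mem : ∀ {Q Q' : Sys} {a}, SStep Q (.inp a l) Q' → AtomsRestr l M Q → a ∉ M := by
  intro Q
  induction Q with
  | atom C r =>
    intro Q' a h hg
    cases h with
    | atomInp h1 =>
      obtain ⟨X, rfl⟩ := hg rfl
      obtain ⟨-, -, -, hin⟩ := ostep_restrict_inv h1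
      exact fun haM => hin a haM rfl
  | par P Q ihP ihQ =>
    intro Q' a h hg
    cases h with
    | parL h1 _ => exact ihP h1 hg.1
    | parR h1 _ => exact ihQ h1 hg.2

lemma sstep_out_pend : ∀ {Q Q' : Sys} {a r}, SStep Q (.out a r l) Q' → PendOut a l Q := by
  intro Q
  induction Q with
  | atom C rr =>
    intro Q' a r h
    cases h with
    | atomOut h1 => exact ⟨_, h1⟩
  | par P Q ihP ihQ =>
    intro Q' a r h
    cases h with
    | parL h1 _ => exact Or.inl (ihP h1)
    | parR h1 _ => exact Or.inr (ihQ h1)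

lemma pend_sstep : ∀ {S μ S'} {a}, SStep S μ S' → AllOP S → AtomsRestr l M S → a ∈ M →
    μ ≠ .tick → (∀ r, μ ≠ .out a r l) → PendOut a l S → PendOut a l S' := by
  intro S
  induction S with
  | atom C r =>
    intro μ S' a h hop hg haM hnt hno hp
    obtain ⟨E', hE'⟩ := hp
    have pers := (hop C (OReach.refl C) a l ⟨E', hE'⟩).2
    cases h with
    | atomTau h1 => exact pers _ _ h1 (by simp)
    | atomInp h1 => exact pers _ _ h1 (by simp)
    | atomOut h1 =>
      rename_i b s C₂
      refine pers _ _ h1 ?_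
      intro he
      injection he with hb hs
      subst hb; subst hs
      exact hno r rfl
    | atomTick h1 => exact absurd rfl hnt
  | par P Q ihP ihQ =>
    intro μ S' a h hop hg haM hnt hno hp
    cases h with
    | parL h1 hne =>
      rcases hp with hp | hp
      · exact Or.inl (ihP h1 hop.1 hg.1 haM hnt hno hp)
      · exact Or.inr hp
    | parR h1 hne =>
      rcases hp with hp | hp
      · exact Or.inl hp
      · exact Or.inr (ihQ h1 hop.2 hg.2 haM hnt hno hp)
    | commLR h1 h2 =>
      rename_i b r s P₂ Q₂
      by_cases hbs : b = a ∧ s = l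
      · obtain ⟨rfl, rfl⟩ := hbs
        exact absurd haM (sstep_inp_not_mem h2 hg.2)
      · rcases hp with hp | hp
        · refine Or.inl (ihP h1 hop.1 hg.1 haM (by simp) ?_ hp)
          intro r' he
          injection he with e1 e2 e3
          exact hbs ⟨e1, e3⟩
        · exact Or.inr (ihQ h2 hop.2 hg.2 haM (by simp) (by intro r' he; cases he) hp)
    | commRL h1 h2 =>
      rename_i b s P₂ r Q₂
      by_cases hbs : b = a ∧ s = l
      · obtain ⟨rfl, rfl⟩ := hbs
        exact absurd haM (sstep_inp_not_mem h1 hg.1)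
      · rcases hp with hp | hp
        · exact Or.inl (ihP h1 hop.1 hg.1 haM (by simp) (by intro r' he; cases he) hp)
        · refine Or.inr (ihQ h2 hop.2 hg.2 haM (by simp) ?_ hp)
          intro r' he
          injection he with e1 e2 e3
          exact hbs ⟨e1, e3⟩
    | parTick h1 h2 => exact absurd rfl hnt

lemma pend_no_tick : ∀ {S} {a}, AllOP S → PendOut a l S → ¬ CanTick S := by
  intro S
  induction S with
  | atom C r =>
    rintro a hop hp ⟨S', hS'⟩
    cases hS' with
    | atomTick h1 => exact (hop C (OReach.refl C) a l hp).1 ⟨_, h1⟩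
  | par P Q ihP ihQ =>
    rintro a hop hp ⟨S', hS'⟩
    cases hS' with
    | parL _ hne => exact absurd rfl hne
    | parR _ hne => exact absurd rfl hne
    | parTick h1 h2 =>
      rcases hp with hp | hp
      · exact ihP hop.1 hp ⟨_, h1⟩
      · exact ihQ hop.2 hp ⟨_, h2⟩

lemma allOP_cstep {S S'} (h : CompleteStep S S') (hop : AllOP S) : AllOP S' := by
  rcases h with h | ⟨a, r, s, h⟩
  · exact allOP_sstep h hop
  · exact allOP_sstep h hop

lemma atomsRestr_cstep {S S'} (h : CompleteStep S S') (hg : AtomsRestr l M S) :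
    AtomsRestr l M S' := by
  rcases h with h | ⟨a, r, s, h⟩
  · exact atomsRestr_sstep h hg
  · exact atomsRestr_sstep h hg

lemma blocked : ∀ {S S'} {a}, Reach S S' → AllOP S → AtomsRestr l M S → a ∈ M →
    PendOut a l S → ¬ CanTick S' := by
  intro S S' a h
  induction h with
  | refl P => intro hop _ _ hp; exact pend_no_tick hop hp
  | step hst hr ih =>
    intro hop hg haM hp
    rcases hst with h1 | ⟨b, r, s, h1⟩
    · exact ih (allOP_sstep h1 hop) (atomsRestr_sstep h1 hg) haM
        (pend_sstep h1 hop hg haM (by simp) (by intro r'; simp) hp)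
    · exact ih (allOP_sstep h1 hop) (atomsRestr_sstep h1 hg) haM
        (pend_sstep h1 hop hg haM (by simp) (by intro r'; simp) hp)

/-! #### Encoding a system as a test -/

/-- The test determined by a system `P` observed from role `l`. -/
inductive TStep (l : Role) : Option Sys → TLab → Option Sys → Prop
  | tau : CompleteStep Q Q' → TStep l (some Q) .tau (some Q')
  | syncOut : SStep Q (.inp a s) Q' → TStep l (some Q) (.sync (.out a s)) (some Q')
  | syncInp : SStep Q (.out a r l) Q' → TStep l (some Q) (.sync (.inp a)) (some Q')
  | syncTick : SStep Q .tick Q' → TStep l (some Q) (.sync .tick) none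
  | succ : TStep l none .succ none

/-- The test LTS associated with a system `P` and a role `l`. -/
abbrev TestOf (l : Role) (P : Sys) : TestLTS := ⟨Option Sys, TStep l, some P⟩

lemma tcstep_inv {P : Sys} {D Q c'} (h : TCStep (TestOf l P) (D, some Q) c') :
    (∃ D' Q', c' = (D', some Q') ∧
      CompleteStep (.par (.atom D l) Q) (.par (.atom D' l) Q')) ∨
    ∃ D', c' = (D', none) ∧ CanTick (.par (.atom D l) Q) := by
  cases h with
  | ctau h1 => exact Or.inl ⟨_, Q, rfl, Or.inl (SStep.parL (SStep.atomTau h1) (by simp))⟩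
  | ttau h1 =>
    cases h1 with
    | tau h2 =>
      refine Or.inl ⟨D, _, rfl, ?_⟩
      rcases h2 with h2 | ⟨a, r, s, h2⟩
      · exact Or.inl (SStep.parR h2 (by simp))
      · exact Or.inr ⟨a, r, s, SStep.parR h2 (by simp)⟩
  | sync h1 hne h2 =>
    cases h2 with
    | syncOut h3 =>
      exact Or.inl ⟨_, _, rfl, Or.inr ⟨_, l, _, SStep.commLR (SStep.atomOut h1) h3⟩⟩
    | syncInp h3 =>
      exact Or.inl ⟨_, _, rfl, Or.inr ⟨_, _, l, SStep.commRL (SStep.atomInp h1) h3⟩⟩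
    | syncTick h3 =>
      exact Or.inr ⟨_, rfl, ⟨_, SStep.parTick (SStep.atomTick h1) h3⟩⟩

lemma sys_to_tcstep {P : Sys} {D Q R} (h : CompleteStep (.par (.atom D l) Q) R) :
    ∃ D' Q', R = .par (.atom D' l) Q' ∧ TCStep (TestOf l P) (D, some Q) (D', some Q') := by
  rcases h with h1 | ⟨a, r, s, h1⟩
  · cases h1 with
    | parL h2 hne =>
      cases h2 with
      | atomTau h3 => exact ⟨_, Q, rfl, TCStep.ctau h3⟩
    | parR h2 hne => exact ⟨D, _, rfl, TCStep.ttau (TStep.tau (Or.inl h2))⟩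
  · cases h1 with
    | parL h2 hne => cases h2
    | parR h2 hne => exact ⟨D, _, rfl, TCStep.ttau (TStep.tau (Or.inr ⟨a, r, s, h2⟩))⟩
    | commLR h2 h3 =>
      cases h2 with
      | atomOut h4 => exact ⟨_, _, rfl, TCStep.sync h4 (by simp) (TStep.syncOut h3)⟩
    | commRL h2 h3 =>
      cases h2 with
      | atomInp h4 => exact ⟨_, _, rfl, TCStep.sync h4 (by simp) (TStep.syncInp h3)⟩

lemma tick_to_tcstep {P : Sys} {D Q} (h : CanTick (.par (.atom D l) Q)) :
    ∃ D', TCStep (TestOf l P) (D, some Q) (D', none) := by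
  obtain ⟨R, hR⟩ := h
  cases hR with
  | parL _ hne => exact absurd rfl hne
  | parR _ hne => exact absurd rfl hne
  | parTick h1 h2 =>
    cases h1 with
    | atomTick h3 => exact ⟨_, TCStep.sync h3 (by simp) (TStep.syncTick h2)⟩

lemma tcreach_trans {T : TestLTS} {a b c} (h1 : TCReach T a b) (h2 : TCReach T b c) :
    TCReach T a c := by
  induction h1 with
  | refl => exact h2
  | step hs _ ih => exact TCReach.step hs (ih h2)

lemma reach_to_tc {P : Sys} : ∀ {S R}, Reach S R → ∀ D Q, S = .par (.atom D l) Q →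
    ∃ D' Q', R = .par (.atom D' l) Q' ∧ TCReach (TestOf l P) (D, some Q) (D', some Q') := by
  intro S R h
  induction h with
  | refl S => intro D Q hS; exact ⟨D, Q, hS, TCReach.refl _⟩
  | step hst hr ih =>
    intro D Q hS; subst hS
    obtain ⟨D₁, Q₁, rfl, htc⟩ := sys_to_tcstep (P := P) hst
    obtain ⟨D', Q', hR, htcr⟩ := ih D₁ Q₁ rfl
    exact ⟨D', Q', hR, TCReach.step htc htcr⟩

lemma tc_none_forever {P : Sys} : ∀ {c₀ c}, TCReach (TestOf l P) c₀ c → c₀.2 = none →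
    c.2 = none := by
  intro c₀ c h
  induction h with
  | refl c => exact id
  | step hst hr ih =>
    intro h0
    apply ih
    cases hst with
    | ctau _ => exact h0
    | ttau h2 =>
      have h0' : _ = (none : Option Sys) := h0
      subst h0'
      cases h2
    | sync _ _ h2 =>
      have h0' : _ = (none : Option Sys) := h0
      subst h0'
      cases h2

lemma tc_to_reach_tick {P : Sys} : ∀ {c₀ c}, TCReach (TestOf l P) c₀ c →
    ∀ D Q, c₀ = (D, some Q) → c.2 = none →
    ∃ D₁ Q₁, Reach (.par (.atom D l) Q) (.par (.atom D₁ l) Q₁) ∧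
      CanTick (.par (.atom D₁ l) Q₁) := by
  intro c₀ c h
  induction h with
  | refl c => intro D Q h0 hn; subst h0; simp at hn
  | step hst hr ih =>
    intro D Q h0 hn; subst h0
    rcases tcstep_inv hst with ⟨D₂, Q₂, rfl, hcs⟩ | ⟨D₂, rfl, hct⟩
    · obtain ⟨D₁, Q₁, hre, ht⟩ := ih D₂ Q₂ rfl hn
      exact ⟨D₁, Q₁, Reach.step hcs hre, ht⟩
    · exact ⟨D, Q, Reach.refl _, hct⟩

lemma tcreach_inv {P : Sys} : ∀ {c₀ c}, TCReach (TestOf l P) c₀ c → ∀ D Q, c₀ = (D, some Q) →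
    c.2 = none ∨ ∃ D' Q', c = (D', some Q') ∧
      Reach (.par (.atom D l) Q) (.par (.atom D' l) Q') := by
  intro c₀ c h
  induction h with
  | refl c => intro D Q h0; subst h0; exact Or.inr ⟨D, Q, rfl, Reach.refl _⟩
  | step hst hr ih =>
    intro D Q h0; subst h0
    rcases tcstep_inv hst with ⟨D₂, Q₂, rfl, hcs⟩ | ⟨D₂, rfl, -⟩
    · rcases ih D₂ Q₂ rfl with hn | ⟨D', Q', hc, hre⟩
      · exact Or.inl hn
      · exact Or.inr ⟨D', Q', hc, Reach.step hcs hre⟩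
    · exact Or.inl (tc_none_forever hr rfl)

lemma correct_to_shd {P : Sys} {C0 : Orc} (h : Correct (.par (.atom C0 l) P)) :
    Shd C0 (TestOf l P) := by
  intro c hc
  rcases tcreach_inv hc C0 P rfl with hn | ⟨D, Q, rfl, hre⟩
  · refine ⟨c, TCReach.refl c, ?_⟩
    rw [hn]
    exact ⟨none, TStep.succ⟩
  · obtain ⟨R, hR, hT⟩ := h _ hre
    obtain ⟨D', Q', rfl, htcr⟩ := reach_to_tc (P := P) hR D Q rfl
    obtain ⟨D'', htc⟩ := tick_to_tcstep (P := P) hT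
    exact ⟨(D'', none), tcreach_trans htcr (TCReach.step htc (TCReach.refl _)),
      ⟨none, TStep.succ⟩⟩

lemma shd_to_correct {P : Sys} {C0 : Orc} (h : Shd C0 (TestOf l P)) :
    Correct (.par (.atom C0 l) P) := by
  intro R hR
  obtain ⟨D, Q, rfl, htcr⟩ := reach_to_tc (P := P) hR C0 P rfl
  obtain ⟨c', hc', t', hsucc⟩ := h (D, some Q) htcr
  obtain ⟨c1, c2⟩ := c'
  cases hsucc
  obtain ⟨D₁, Q₁, hre, ht⟩ := tc_to_reach_tick hc' D Q rfl rfl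
  exact ⟨_, hre, ht⟩

/-! #### Transfer between restricted and unrestricted contract -/

lemma reach_snoc {a b c : Sys} (h1 : Reach a b) (h2 : CompleteStep b c) : Reach a c := by
  induction h1 with
  | refl => exact Reach.step h2 (Reach.refl _)
  | step hs _ ih => exact Reach.step hs (ih h2)

lemma lift_restricted : ∀ {S R}, Reach S R → ∀ D Q, S = .par (.atom (restrict D M) l) Q →
    ∃ D₁ Q₁, R = .par (.atom (restrict D₁ M) l) Q₁ ∧
      Reach (.par (.atom D l) Q) (.par (.atom D₁ l) Q₁) := by
  intro S R h
  induction h with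
  | refl => intro D Q hS; exact ⟨D, Q, hS, Reach.refl _⟩
  | step hst hr ih =>
    intro D Q hS; subst hS
    rcases hst with h1 | ⟨a, r, s, h1⟩
    · cases h1 with
      | parL h2 hne =>
        cases h2 with
        | atomTau h3 =>
          obtain ⟨D₂, hD₂, rfl, -⟩ := ostep_restrict_inv h3
          obtain ⟨D₁, Q₁, hR, hre⟩ := ih D₂ Q rfl
          exact ⟨D₁, Q₁, hR,
            Reach.step (Or.inl (SStep.parL (SStep.atomTau hD₂) (by simp))) hre⟩
      | parR h2 hne =>
        obtain ⟨D₁, Q₁, hR, hre⟩ := ih D _ rfl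
        exact ⟨D₁, Q₁, hR, Reach.step (Or.inl (SStep.parR h2 hne)) hre⟩
    · cases h1 with
      | parL h2 hne => cases h2
      | parR h2 hne =>
        obtain ⟨D₁, Q₁, hR, hre⟩ := ih D _ rfl
        exact ⟨D₁, Q₁, hR, Reach.step (Or.inr ⟨a, r, s, SStep.parR h2 hne⟩) hre⟩
      | commLR h2 h3 =>
        cases h2 with
        | atomOut h4 =>
          obtain ⟨D₂, hD₂, rfl, -⟩ := ostep_restrict_inv h4
          obtain ⟨D₁, Q₁, hR, hre⟩ := ih D₂ _ rfl
          exact ⟨D₁, Q₁, hR,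
            Reach.step (Or.inr ⟨a, l, s, SStep.commLR (SStep.atomOut hD₂) h3⟩) hre⟩
      | commRL h2 h3 =>
        cases h2 with
        | atomInp h4 =>
          obtain ⟨D₂, hD₂, rfl, -⟩ := ostep_restrict_inv h4
          obtain ⟨D₁, Q₁, hR, hre⟩ := ih D₂ _ rfl
          exact ⟨D₁, Q₁, hR,
            Reach.step (Or.inr ⟨a, r, l, SStep.commRL (SStep.atomInp hD₂) h3⟩) hre⟩

lemma tick_lift {D Q} (h : CanTick (.par (.atom (restrict D M) l) Q)) :
    CanTick (.par (.atom D l) Q) := by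
  obtain ⟨R, hR⟩ := h
  cases hR with
  | parL _ hne => exact absurd rfl hne
  | parR _ hne => exact absurd rfl hne
  | parTick h1 h2 =>
    cases h1 with
    | atomTick h3 =>
      obtain ⟨D₂, hD₂, -, -⟩ := ostep_restrict_inv h3
      exact ⟨_, SStep.parTick (SStep.atomTick hD₂) h2⟩

lemma transfer_s4 {Sinit : Sys} (hcorr0 : Correct Sinit) :
    ∀ {S R}, Reach S R → ∀ D Q, S = .par (.atom D l) Q →
      Reach Sinit (.par (.atom (restrict D M) l) Q) →
      AllOP (.par (.atom (restrict D M) l) Q) →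
      AtomsRestr l M (.par (.atom (restrict D M) l) Q) →
      ∃ D' Q', R = .par (.atom D' l) Q' ∧
        Reach Sinit (.par (.atom (restrict D' M) l) Q') := by
  intro S R h
  induction h with
  | refl => intro D Q hS h1 _ _; exact ⟨D, Q, hS, h1⟩
  | step hst hr ih =>
    intro D Q hS hreach hop hg; subst hS
    rcases hst with h1 | ⟨a, r, s, h1⟩
    · cases h1 with
      | parL h2 hne =>
        cases h2 with
        | atomTau h3 =>
          have hs' : CompleteStep (.par (.atom (restrict D M) l) Q) _ :=
            Or.inl (SStep.parL (SStep.atomTau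
              (ostep_restrict h3 (by intro b _ hc; cases hc))) (by simp))
          exact ih _ Q rfl (reach_snoc hreach hs') (allOP_cstep hs' hop)
            (atomsRestr_cstep hs' hg)
      | parR h2 hne =>
        have hs' : CompleteStep (.par (.atom (restrict D M) l) Q) _ :=
          Or.inl (SStep.parR h2 hne)
        exact ih D _ rfl (reach_snoc hreach hs') (allOP_cstep hs' hop)
          (atomsRestr_cstep hs' hg)
    · cases h1 with
      | parL h2 hne => cases h2
      | parR h2 hne =>
        have hs' : CompleteStep (.par (.atom (restrict D M) l) Q) _ :=
          Or.inr ⟨a, r, s, SStep.parR h2 hne⟩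
        exact ih D _ rfl (reach_snoc hreach hs') (allOP_cstep hs' hop)
          (atomsRestr_cstep hs' hg)
      | commLR h2 h3 =>
        cases h2 with
        | atomOut h4 =>
          have hs' : CompleteStep (.par (.atom (restrict D M) l) Q) _ :=
            Or.inr ⟨a, l, s, SStep.commLR (SStep.atomOut
              (ostep_restrict h4 (by intro b _ hc; cases hc))) h3⟩
          exact ih _ _ rfl (reach_snoc hreach hs') (allOP_cstep hs' hop)
            (atomsRestr_cstep hs' hg)
      | commRL h2 h3 =>
        cases h2 with
        | atomInp h4 =>
          by_cases haM : a ∈ M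
          · exfalso
            obtain ⟨R₂, hR₂, htick⟩ := hcorr0 _ hreach
            exact blocked hR₂ hop hg haM (Or.inr (sstep_out_pend h3)) htick
          · have hs' : CompleteStep (.par (.atom (restrict D M) l) Q) _ :=
              Or.inr ⟨a, r, l, SStep.commRL (SStep.atomInp
                (ostep_restrict h4 (by intro b hb hc; cases hc; exact haM hb))) h3⟩
            exact ih _ _ rfl (reach_snoc hreach hs') (allOP_cstep hs' hop)
              (atomsRestr_cstep hs' hg)

end ShouldSound

/-- Soundness of the should-testing characterization: for all
output persistent contracts `C`, `C'`, if
`NF(C' \\ (I(C') − I(C))) ⪯_test NF(C)` then `C' ⪯ C`. -/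
theorem should_testing_sound (C C' : Orc)
    (hC : OutputPersistent C) (hC' : OutputPersistent C')
    (h : ShouldPre (NF (restrict C' (inames C' \ inames C))) (NF C)) :
    Subcontract C' C := by
  intro l hl P hOP hWF hlP hcorr
  have hshd : Shd (restrict C' (inames C' \ inames C)) (TestOf l P) :=
    h (TestOf l P) (correct_to_shd hcorr)
  have hcorr0 : Correct (.par (.atom (restrict C' (inames C' \ inames C)) l) P) :=
    shd_to_correct hshd
  intro R hR
  obtain ⟨D, Q, rfl, hreach⟩ := transfer_s4 hcorr0 hR C' P rfl (Reach.refl _)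
    ⟨restrict_OP hC', hOP⟩ ⟨fun _ => ⟨C', rfl⟩, atomsRestr_of_not_mem hlP⟩
  obtain ⟨R₂, hR₂, htick⟩ := hcorr0 _ hreach
  obtain ⟨D₁, Q₁, rfl, hre⟩ := lift_restricted hR₂ D Q rfl
  exact ⟨_, hre, tick_lift htick⟩
end
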